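/- arXiv:0801.2006 — 10 statements merged into one kernel-verified Lean document; each statement's English description precedes it below -/
import Mathlib

section
/- Let M be a metric space, let X, Y ⊆ M, and let E₁ ⊆ X and E₂ ⊆ Y be nonempty subsets with Metric.hausdorffEdist E₁ E₂ < ∞; write D = d_H(E₁, E₂). Let K ≥ 1 and C ≥ 0, and assume that for every x ∈ X and y ∈ Y one has dist(x, E₁) + D + dist(y, E₂) ≤ K · dist(x, y) + C. Then: (i) every point e ∈ E₁ ∪ E₂ satisfies dist(e, X) ≤ D and dist(e, Y) ≤ D; and (ii) for every r ≥ 0 and every q ∈ M with dist(q, X) ≤ r and dist(q, Y) ≤ r, one has dist(q, E₁) ≤ (2K + 1) · r + C − D and dist(q, E₂) ≤ (2K + 1) · r + C − D. (Lemma 3.2 of the paper: junctures represent coarse intersections.) -/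
/-- Lemma 3.2 of Behrstock–Kleiner–Minsky–Mosher: junctures represent coarse
intersections. -/
theorem junctures_represent_coarse_intersection
    {M : Type*} [MetricSpace M] (X Y E₁ E₂ : Set M)
    (hE₁X : E₁ ⊆ X) (hE₂Y : E₂ ⊆ Y)
    (hE₁ : E₁.Nonempty) (hE₂ : E₂.Nonempty)
    (hfin : EMetric.hausdorffEdist E₁ E₂ < ⊤)
    (K C : ℝ) (hK : 1 ≤ K) (hC : 0 ≤ C)
    (hyp : ∀ x ∈ X, ∀ y ∈ Y,
      Metric.infDist x E₁ + Metric.hausdorffDist E₁ E₂ + Metric.infDist y E₂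
        ≤ K * dist x y + C) :
    (∀ e ∈ E₁ ∪ E₂,
        Metric.infDist e X ≤ Metric.hausdorffDist E₁ E₂ ∧
        Metric.infDist e Y ≤ Metric.hausdorffDist E₁ E₂) ∧
    (∀ r : ℝ, 0 ≤ r → ∀ q : M,
        Metric.infDist q X ≤ r → Metric.infDist q Y ≤ r →
        Metric.infDist q E₁ ≤ (2 * K + 1) * r + C - Metric.hausdorffDist E₁ E₂ ∧
        Metric.infDist q E₂ ≤ (2 * K + 1) * r + C - Metric.hausdorffDist E₁ E₂) := by
  have hfin' : EMetric.hausdorffEdist E₁ E₂ ≠ ⊤ := hfin.ne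
  have hfin'' : EMetric.hausdorffEdist E₂ E₁ ≠ ⊤ := by
    have h := Metric.hausdorffEDist_comm (s := E₂) (t := E₁)
    exact fun h' => hfin' (h.symm.trans h')
  have hD : 0 ≤ Metric.hausdorffDist E₁ E₂ := Metric.hausdorffDist_nonneg
  set D := Metric.hausdorffDist E₁ E₂ with hDdef
  constructor
  · rintro e (he | he)
    · constructor
      · rw [Metric.infDist_zero_of_mem (hE₁X he)]; exact hD
      · calc Metric.infDist e Y ≤ Metric.infDist e E₂ :=
              Metric.infDist_le_infDist_of_subset hE₂Y hE₂
          _ ≤ Metric.infDist e E₁ + D := Metric.infDist_le_infDist_add_hausdorffDist hfin'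
          _ = D := by rw [Metric.infDist_zero_of_mem he, zero_add]
    · constructor
      · calc Metric.infDist e X ≤ Metric.infDist e E₁ :=
              Metric.infDist_le_infDist_of_subset hE₁X hE₁
          _ ≤ Metric.infDist e E₂ + Metric.hausdorffDist E₂ E₁ :=
              Metric.infDist_le_infDist_add_hausdorffDist hfin''
          _ = D := by
              rw [Metric.infDist_zero_of_mem he, zero_add, Metric.hausdorffDist_comm]
      · rw [Metric.infDist_zero_of_mem (hE₂Y he)]; exact hD
  · intro r hr q hqX hqY
    have hKpos : (0:ℝ) < K := lt_of_lt_of_le one_pos hK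
    have h2K1 : (0:ℝ) < 2 * K + 1 := by linarith
    have key : ∀ ε > (0:ℝ),
        Metric.infDist q E₁ ≤ (2 * K + 1) * r + C - D + ε ∧
        Metric.infDist q E₂ ≤ (2 * K + 1) * r + C - D + ε := by
      intro ε hε
      set δ := ε / (2 * K + 1) with hδdef
      have hδ : 0 < δ := div_pos hε h2K1
      obtain ⟨x, hxX, hx⟩ := (Metric.infDist_lt_iff (hE₁.mono hE₁X)).mp
        (lt_of_le_of_lt hqX (show r < r + δ by linarith))
      obtain ⟨y, hyY, hy⟩ := (Metric.infDist_lt_iff (hE₂.mono hE₂Y)).mp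
        (lt_of_le_of_lt hqY (show r < r + δ by linarith))
      have hxy : dist x y ≤ 2 * r + 2 * δ := by
        calc dist x y ≤ dist x q + dist q y := dist_triangle x q y
          _ ≤ 2 * r + 2 * δ := by rw [dist_comm x q]; linarith
      have hmain := hyp x hxX y hyY
      have hKxy : K * dist x y ≤ K * (2 * r + 2 * δ) := by
        exact mul_le_mul_of_nonneg_left hxy hKpos.le
      have hy2 : 0 ≤ Metric.infDist y E₂ := Metric.infDist_nonneg
      have hx1 : 0 ≤ Metric.infDist x E₁ := Metric.infDist_nonneg
      have hδε : (2 * K + 1) * δ = ε := by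
        rw [hδdef, mul_div_cancel₀ _ h2K1.ne']
      constructor
      · have : Metric.infDist q E₁ ≤ Metric.infDist x E₁ + dist q x :=
          Metric.infDist_le_infDist_add_dist
        nlinarith
      · have : Metric.infDist q E₂ ≤ Metric.infDist y E₂ + dist q y :=
          Metric.infDist_le_infDist_add_dist
        nlinarith
    constructor
    · exact le_of_forall_pos_le_add fun ε hε => (key ε hε).1
    · exact le_of_forall_pos_le_add fun ε hε => (key ε hε).2
end

section
/- For every δ ≥ 0 and every N ∈ ℕ there exists Q ≥ 0, depending only on δ and N, with the following property: if X is a δ-hyperbolic geodesic metric space, A ⊆ X is a nonempty finite set with at most N elements, and H is a geodesic hull of A, then H is Q-quasiconvex. (Lemma 5.1(1) of the paper: hyperbolic hulls of finite sets are quasiconvex, with constants depending only on the hyperbolicity constant and the cardinality of A.) -/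
/-- A metric space is `δ`-hyperbolic if it satisfies the four-point condition. -/
def DeltaHyperbolic (X : Type*) [MetricSpace X] (δ : ℝ) : Prop :=
  ∀ w x y z : X,
    dist w x + dist y z ≤ max (dist w y + dist x z) (dist w z + dist x y) + 2 * δ

/-- `γ : ℝ → X` is a geodesic from `a` to `b`, parametrized by arclength on
`[0, dist a b]`. -/
def IsGeodesicFrom {X : Type*} [MetricSpace X] (γ : ℝ → X) (a b : X) : Prop :=
  γ 0 = a ∧ γ (dist a b) = b ∧
    ∀ s ∈ Set.Icc (0 : ℝ) (dist a b), ∀ t ∈ Set.Icc (0 : ℝ) (dist a b),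
      dist (γ s) (γ t) = |s - t|

/-- A metric space is geodesic if every pair of points is joined by a geodesic. -/
def GeodesicSpace (X : Type*) [MetricSpace X] : Prop :=
  ∀ a b : X, ∃ γ : ℝ → X, IsGeodesicFrom γ a b

/-- `H` is a geodesic hull of `A`: the union over pairs `(a, a') ∈ A × A` of the
image of a chosen geodesic from `a` to `a'`. -/
def IsGeodesicHull {X : Type*} [MetricSpace X] (A H : Set X) : Prop :=
  ∃ γ : X → X → ℝ → X,
    (∀ a ∈ A, ∀ a' ∈ A, IsGeodesicFrom (γ a a') a a') ∧
    H = ⋃ a ∈ A, ⋃ a' ∈ A, γ a a' '' Set.Icc 0 (dist a a')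

/-- A subset `B` is `Q`-quasiconvex if every point on every geodesic joining
two points of `B` lies within distance `Q` of `B`. -/
def IsQuasiconvexSet {X : Type*} [MetricSpace X] (Q : ℝ) (B : Set X) : Prop :=
  ∀ p ∈ B, ∀ q ∈ B, ∀ γ : ℝ → X, IsGeodesicFrom γ p q →
    ∀ t ∈ Set.Icc (0 : ℝ) (dist p q), Metric.infDist (γ t) B ≤ Q

/-- Any point is close to a geodesic, up to its Gromov product with the endpoints. -/
lemma geodA {X : Type*} [MetricSpace X] {δ : ℝ} (hX : DeltaHyperbolic X δ)
    {σ : ℝ → X} {a b : X} (h : IsGeodesicFrom σ a b) (m : X) :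
    ∃ s ∈ Set.Icc (0:ℝ) (dist a b),
      dist m (σ s) ≤ (dist m a + dist m b - dist a b)/2 + 2*δ := by
  obtain ⟨h0, hd, hiso⟩ := h
  set d := dist a b with hdd
  set s := (dist m a + d - dist m b)/2 with hs
  have h1 : dist m b ≤ dist m a + d := dist_triangle m a b
  have h2 : dist m a ≤ dist m b + d := by
    have := dist_triangle m b a
    rw [dist_comm b a] at this; linarith
  have hd0 : (0:ℝ) ≤ d := dist_nonneg
  have hs2 : 2*s = dist m a + d - dist m b := by rw [hs]; ring
  have hs0 : 0 ≤ s := by linarith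
  have hsd : s ≤ d := by linarith
  have hsa : dist (σ s) a = s := by
    have h' := hiso s ⟨hs0, hsd⟩ 0 ⟨le_refl 0, hd0⟩
    rw [h0] at h'
    rw [h', sub_zero, abs_of_nonneg hs0]
  have hsb : dist (σ s) b = d - s := by
    have h' := hiso s ⟨hs0, hsd⟩ d ⟨hd0, le_refl d⟩
    rw [hd] at h'
    rw [h', abs_of_nonpos (by linarith), neg_sub]
  have hyp := hX m (σ s) a b
  rw [hsa, hsb, ← hdd] at hyp
  refine ⟨s, ⟨hs0, hsd⟩, ?_⟩
  rcases max_cases (dist m a + (d - s)) (dist m b + s) with ⟨he, _⟩ | ⟨he, _⟩ <;>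
    rw [he] at hyp <;> linarith

/-- Four-point condition in "thin" form for a point between `p` and `q`. -/
lemma geodB {X : Type*} [MetricSpace X] {δ : ℝ} (hX : DeltaHyperbolic X δ)
    {m p q : X} (hm : dist m p + dist m q = dist p q) (c : X) :
    dist m p + dist m c - dist p c ≤ 2*δ ∨ dist m q + dist m c - dist q c ≤ 2*δ := by
  have h := hX p q m c
  rw [dist_comm p m, dist_comm q m, dist_comm q c, dist_comm p c] at h
  rcases max_cases (dist m p + dist c q) (dist c p + dist m q) with ⟨he, _⟩ | ⟨he, _⟩ <;>
    rw [he] at h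
  · right; rw [dist_comm q c, dist_comm m c] at *; linarith
  · left; rw [dist_comm p c, dist_comm m c] at *; linarith

/-- The initial segment of a geodesic is a geodesic. -/
lemma geod_init {X : Type*} [MetricSpace X] {γ : ℝ → X} {a b : X}
    (h : IsGeodesicFrom γ a b) {u : ℝ} (hu : u ∈ Set.Icc 0 (dist a b)) :
    dist a (γ u) = u ∧ IsGeodesicFrom γ a (γ u) := by
  obtain ⟨h0, hd, hiso⟩ := h
  have hda : dist a (γ u) = u := by
    have h' := hiso 0 ⟨le_refl 0, dist_nonneg⟩ u hu
    rw [h0] at h'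
    rw [h', zero_sub, abs_neg, abs_of_nonneg hu.1]
  refine ⟨hda, h0, by rw [hda], fun s hs t ht => ?_⟩
  rw [hda] at hs ht
  exact hiso s ⟨hs.1, hs.2.trans hu.2⟩ t ⟨ht.1, ht.2.trans hu.2⟩

/-- The reversed initial segment of a geodesic is a geodesic. -/
lemma geod_rev {X : Type*} [MetricSpace X] {γ : ℝ → X} {a b : X}
    (h : IsGeodesicFrom γ a b) {u : ℝ} (hu : u ∈ Set.Icc 0 (dist a b)) :
    dist (γ u) a = u ∧ IsGeodesicFrom (fun s => γ (u - s)) (γ u) a := by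
  obtain ⟨hda, -⟩ := geod_init h hu
  obtain ⟨h0, hd, hiso⟩ := h
  have hda' : dist (γ u) a = u := by rw [dist_comm]; exact hda
  refine ⟨hda', by simp, ?_, fun s hs t ht => ?_⟩
  · rw [hda']; simp [h0]
  · rw [hda'] at hs ht
    have hus : u - s ∈ Set.Icc 0 (dist a b) :=
      ⟨by linarith [hs.2], by linarith [hs.1, hu.2]⟩
    have hut : u - t ∈ Set.Icc 0 (dist a b) :=
      ⟨by linarith [ht.2], by linarith [ht.1, hu.2]⟩
    simp only
    rw [hiso _ hus _ hut]
    rw [show u - s - (u - t) = -(s - t) by ring, abs_neg]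

universe u

/-- Lemma 5.1(1): hyperbolic hulls of finite sets are quasiconvex, with constant
depending only on δ and the cardinality bound. -/
theorem hyperbolic_hulls_quasiconvex :
    ∀ (δ : ℝ), 0 ≤ δ → ∀ N : ℕ, ∃ Q : ℝ, 0 ≤ Q ∧
      ∀ (X : Type u) [MetricSpace X], DeltaHyperbolic X δ → GeodesicSpace X →
        ∀ (A : Finset X), A.Nonempty → A.card ≤ N →
          ∀ H : Set X, IsGeodesicHull (↑A) H → IsQuasiconvexSet Q H := by
  intro δ hδ0 N
  refine ⟨6*δ, by linarith, ?_⟩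
  intro X _ hX hgeo A _hA _hcard H hHull
  obtain ⟨g, hg, hH⟩ := hHull
  have hsub : ∀ x ∈ A, ∀ y ∈ A, ∀ s ∈ Set.Icc (0:ℝ) (dist x y), g x y s ∈ H := by
    intro x hx y hy s hs
    rw [hH]
    simp only [Set.mem_iUnion, Set.mem_image]
    exact ⟨x, hx, y, hy, s, hs, rfl⟩
  intro p hp q hq γ hγ t ht
  rw [hH] at hp hq
  simp only [Set.mem_iUnion, Set.mem_image, Finset.mem_coe] at hp hq
  obtain ⟨a, ha, b, hb, u₀, hu₀, hpe⟩ := hp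
  obtain ⟨a', ha', b', hb', u₁, hu₁, hqe⟩ := hq
  set m := γ t with hm
  have key : ∀ y, y ∈ H → dist m y ≤ 6*δ → Metric.infDist m H ≤ 6*δ :=
    fun y hy hd => le_trans (Metric.infDist_le_dist_of_mem hy) hd
  obtain ⟨hγ0, hγd, hγiso⟩ := hγ
  have hmp : dist m p = t := by
    have h' := hγiso t ht 0 ⟨le_refl 0, dist_nonneg⟩
    rw [hγ0] at h'
    rw [hm, h', sub_zero, abs_of_nonneg ht.1]
  have hmq : dist m q = dist p q - t := by
    have h' := hγiso t ht (dist p q) ⟨dist_nonneg, le_refl _⟩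
    rw [hγd] at h'
    rw [hm, h', abs_of_nonpos (by linarith [ht.2]), neg_sub]
  have hbet : dist m p + dist m q = dist p q := by rw [hmp, hmq]; ring
  rcases geodB hX hbet a' with hcase | hcase
  · -- m is close to a geodesic from p to a'
    obtain ⟨σ, hσ⟩ := hgeo p a'
    obtain ⟨s, hsIcc, hdx⟩ := geodA hX hσ m
    set x := σ s with hx
    have hdmx : dist m x ≤ 3*δ := by
      calc dist m x ≤ (dist m p + dist m a' - dist p a')/2 + 2*δ := hdx
        _ ≤ 3*δ := by linarith
    obtain ⟨hσ0, hσd, hσiso⟩ := hσ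
    have hxp : dist x p = s := by
      have h' := hσiso s hsIcc 0 ⟨le_refl 0, dist_nonneg⟩
      rw [hσ0] at h'
      rw [hx, h', sub_zero, abs_of_nonneg hsIcc.1]
    have hxa' : dist x a' = dist p a' - s := by
      have h' := hσiso s hsIcc (dist p a') ⟨dist_nonneg, le_refl _⟩
      rw [hσd] at h'
      rw [hx, h', abs_of_nonpos (by linarith [hsIcc.2]), neg_sub]
    have hbet' : dist x p + dist x a' = dist p a' := by rw [hxp, hxa']; ring
    rcases geodB hX hbet' a with h1 | h1
    · -- x close to the reversed segment from p to a inside g a b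
      have hgab := hg a ha b hb
      obtain ⟨hdpa, hρ⟩ := geod_rev hgab hu₀
      rw [hpe] at hdpa hρ
      obtain ⟨r, hrIcc, hdy⟩ := geodA hX hρ x
      rw [hdpa] at hrIcc
      have hyH : g a b (u₀ - r) ∈ H :=
        hsub a ha b hb _ ⟨by linarith [hrIcc.2], by linarith [hrIcc.1, hu₀.2]⟩
      refine key _ hyH ?_
      have hdy' : dist x (g a b (u₀ - r)) ≤ 3*δ := by
        calc dist x (g a b (u₀ - r)) ≤ (dist x p + dist x a - dist p a)/2 + 2*δ := hdy
          _ ≤ 3*δ := by linarith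
      calc dist m (g a b (u₀ - r)) ≤ dist m x + dist x (g a b (u₀ - r)) := dist_triangle _ _ _
        _ ≤ 6*δ := by linarith
    · -- x close to the hull geodesic from a' to a
      have hga'a := hg a' ha' a ha
      obtain ⟨r, hrIcc, hdy⟩ := geodA hX hga'a x
      have hyH : g a' a r ∈ H := hsub a' ha' a ha r hrIcc
      refine key _ hyH ?_
      have hdy' : dist x (g a' a r) ≤ 3*δ := by
        calc dist x (g a' a r) ≤ (dist x a' + dist x a - dist a' a)/2 + 2*δ := hdy
          _ ≤ 3*δ := by linarith
      calc dist m (g a' a r) ≤ dist m x + dist x (g a' a r) := dist_triangle _ _ _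
        _ ≤ 6*δ := by linarith
  · -- m is close to the segment of g a' b' from a' to q
    have hga'b' := hg a' ha' b' hb'
    obtain ⟨hda'q, hτ⟩ := geod_init hga'b' hu₁
    rw [hqe] at hda'q hτ
    obtain ⟨r, hrIcc, hdy⟩ := geodA hX hτ m
    rw [hda'q] at hrIcc
    have hyH : g a' b' r ∈ H :=
      hsub a' ha' b' hb' r ⟨hrIcc.1, hrIcc.2.trans hu₁.2⟩
    refine key _ hyH ?_
    calc dist m (g a' b' r) ≤ (dist m a' + dist m q - dist a' q)/2 + 2*δ := hdy
      _ ≤ 3*δ := by rw [dist_comm a' q]; linarith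
      _ ≤ 6*δ := by linarith
end

section
/- For every δ ≥ 0 and every N ∈ ℕ there exist K ≥ 1 and C ≥ 0, depending only on δ and N, with the following property: if X is a δ-hyperbolic geodesic metric space, A ⊆ X is a nonempty finite set with at most N elements, H is a geodesic hull of A, x ∈ X, and y ∈ H satisfies dist x y = Metric.infDist x H (i.e., y is a nearest point of H to x), then for every y' ∈ H one has dist y y' ≤ K · (dist x y' − dist x y) + C. (Lemma 5.1(2) of the paper.) -/
lemma geod_dist_left {X : Type*} [MetricSpace X] {γ : ℝ → X} {a b : X}
    (h : IsGeodesicFrom γ a b) {s : ℝ} (hs : s ∈ Set.Icc 0 (dist a b)) :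
    dist (γ s) a = s := by
  obtain ⟨h0, _, hiso⟩ := h
  have := hiso s hs 0 ⟨le_refl _, dist_nonneg⟩
  rw [h0] at this
  rw [this, sub_zero, abs_of_nonneg hs.1]

lemma geod_dist_right {X : Type*} [MetricSpace X] {γ : ℝ → X} {a b : X}
    (h : IsGeodesicFrom γ a b) {s : ℝ} (hs : s ∈ Set.Icc 0 (dist a b)) :
    dist (γ s) b = dist a b - s := by
  obtain ⟨_, hd, hiso⟩ := h
  have := hiso s hs (dist a b) ⟨dist_nonneg, le_refl _⟩
  rw [hd] at this
  rw [this, abs_of_nonpos (by linarith [hs.2])]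
  ring

lemma geod_point_bound {X : Type*} [MetricSpace X] {δ : ℝ}
    (hX : DeltaHyperbolic X δ) {γ : ℝ → X} {a b : X}
    (hγ : IsGeodesicFrom γ a b) {s : ℝ} (hs : s ∈ Set.Icc 0 (dist a b)) (w : X) :
    dist w (γ s) ≤ max (dist w a - s) (dist w b - (dist a b - s)) + 2 * δ := by
  have hsa : dist (γ s) a = s := geod_dist_left hγ hs
  have hsb : dist (γ s) b = dist a b - s := geod_dist_right hγ hs
  have h4 := hX w (γ s) a b
  rw [hsa, hsb] at h4
  rcases le_total (dist w a + (dist a b - s)) (dist w b + s) with h | h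
  · rw [max_eq_right h] at h4
    have := le_max_right (dist w a - s) (dist w b - (dist a b - s))
    linarith
  · rw [max_eq_left h] at h4
    have := le_max_left (dist w a - s) (dist w b - (dist a b - s))
    linarith

lemma slim_triangle {X : Type*} [MetricSpace X] {δ : ℝ} (hδ : 0 ≤ δ)
    (hX : DeltaHyperbolic X δ) {x y z : X} {γ1 γ2 γ3 : ℝ → X}
    (h1 : IsGeodesicFrom γ1 x y) (h2 : IsGeodesicFrom γ2 x z) (h3 : IsGeodesicFrom γ3 y z)
    {s : ℝ} (hs : s ∈ Set.Icc (0:ℝ) (dist x y)) :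
    ∃ u, (u ∈ Set.Icc (0:ℝ) (dist x z) ∧ dist (γ1 s) (γ2 u) ≤ 4 * δ) ∨
         (u ∈ Set.Icc (0:ℝ) (dist y z) ∧ dist (γ1 s) (γ3 u) ≤ 4 * δ) := by
  have htri : dist x y ≤ dist x z + dist y z := by
    have := dist_triangle x z y
    rw [dist_comm z y] at this
    linarith
  have hzs := geod_point_bound hX h1 hs z
  have e1 : dist (γ1 s) x = s := geod_dist_left h1 hs
  have e2 : dist (γ1 s) y = dist x y - s := geod_dist_right h1 hs
  rcases le_total s ((dist x y + dist x z - dist y z) / 2) with hcase | hcase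
  · have hsxz : s ∈ Set.Icc (0:ℝ) (dist x z) := ⟨hs.1, by linarith⟩
    refine ⟨s, Or.inl ⟨hsxz, ?_⟩⟩
    have hz : dist z (γ1 s) ≤ dist x z - s + 2 * δ := by
      have hmax : max (dist z x - s) (dist z y - (dist x y - s)) ≤ dist x z - s := by
        rw [dist_comm z x, dist_comm z y]
        exact max_le (by linarith) (by linarith)
      linarith
    have hb := geod_point_bound hX h2 hsxz (γ1 s)
    rw [e1] at hb
    have hmax2 : max (s - s) (dist (γ1 s) z - (dist x z - s)) ≤ 2 * δ := by
      refine max_le (by linarith) ?_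
      rw [dist_comm]
      linarith
    linarith
  · have huyz : dist x y - s ∈ Set.Icc (0:ℝ) (dist y z) := ⟨by linarith [hs.2], by linarith⟩
    refine ⟨dist x y - s, Or.inr ⟨huyz, ?_⟩⟩
    have hz : dist z (γ1 s) ≤ dist y z - (dist x y - s) + 2 * δ := by
      have hmax : max (dist z x - s) (dist z y - (dist x y - s)) ≤ dist y z - (dist x y - s) := by
        rw [dist_comm z x, dist_comm z y]
        exact max_le (by linarith) (by linarith)
      linarith
    have hb := geod_point_bound hX h3 huyz (γ1 s)
    rw [e2] at hb
    have hmax2 : max (dist x y - s - (dist x y - s))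
        (dist (γ1 s) z - (dist y z - (dist x y - s))) ≤ 2 * δ := by
      refine max_le (by linarith) ?_
      rw [dist_comm]
      linarith
    linarith

lemma geod_forward {X : Type*} [MetricSpace X] {γ : ℝ → X} {a b : X}
    (h : IsGeodesicFrom γ a b) {t : ℝ} (ht : t ∈ Set.Icc 0 (dist a b)) :
    IsGeodesicFrom (fun u => γ (t + u)) (γ t) b := by
  have hdb : dist (γ t) b = dist a b - t := geod_dist_right h ht
  obtain ⟨h0, hd, hiso⟩ := h
  refine ⟨by simp, ?_, ?_⟩
  · show γ (t + dist (γ t) b) = b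
    rw [hdb, show t + (dist a b - t) = dist a b by ring, hd]
  · intro s hs u hu
    rw [hdb] at hs hu
    show dist (γ (t + s)) (γ (t + u)) = |s - u|
    rw [hiso (t + s) ⟨by linarith [hs.1, ht.1], by linarith [hs.2]⟩
        (t + u) ⟨by linarith [hu.1, ht.1], by linarith [hu.2]⟩,
      show t + s - (t + u) = s - u by ring]

lemma geod_backward {X : Type*} [MetricSpace X] {γ : ℝ → X} {a b : X}
    (h : IsGeodesicFrom γ a b) {t : ℝ} (ht : t ∈ Set.Icc 0 (dist a b)) :
    IsGeodesicFrom (fun u => γ (t - u)) (γ t) a := by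
  have hda : dist (γ t) a = t := geod_dist_left h ht
  obtain ⟨h0, hd, hiso⟩ := h
  refine ⟨by simp, ?_, ?_⟩
  · show γ (t - dist (γ t) a) = a
    rw [hda, sub_self, h0]
  · intro s hs u hu
    rw [hda] at hs hu
    show dist (γ (t - s)) (γ (t - u)) = |s - u|
    rw [hiso (t - s) ⟨by linarith [hs.2], by linarith [hs.1, ht.2]⟩
        (t - u) ⟨by linarith [hu.2], by linarith [hu.1, ht.2]⟩,
      show t - s - (t - u) = -(s - u) by ring, abs_neg]

universe u

/-- Lemma 5.1(2): the nearest-point property of hyperbolic hulls. -/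
theorem hyperbolic_hulls_nearest_point :
    ∀ (δ : ℝ), 0 ≤ δ → ∀ N : ℕ, ∃ K C : ℝ, 1 ≤ K ∧ 0 ≤ C ∧
      ∀ (X : Type u) [MetricSpace X], DeltaHyperbolic X δ → GeodesicSpace X →
        ∀ (A : Finset X), A.Nonempty → A.card ≤ N →
          ∀ H : Set X, IsGeodesicHull (↑A) H →
            ∀ x : X, ∀ y ∈ H, dist x y = Metric.infDist x H →
              ∀ y' ∈ H, dist y y' ≤ K * (dist x y' - dist x y) + C := by
  intro δ hδ N
  refine ⟨1, 20 * δ + 1, le_refl 1, by linarith, ?_⟩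
  intro X _ hX hgeo A hA hcard H hH x y hyH hxy y' hy'H
  have hHne : H.Nonempty := ⟨y, hyH⟩
  have hle : dist x y ≤ dist x y' := hxy ▸ Metric.infDist_le_dist_of_mem hy'H
  obtain ⟨Γ, hΓ, hHeq⟩ := hH
  -- unpack y and y' as points on hull geodesics
  have hyH' := hyH
  rw [hHeq] at hyH'
  simp only [Set.mem_iUnion, Set.mem_image] at hyH'
  obtain ⟨b, hb, b', hb', s₀, hs₀, hy⟩ := hyH'
  have hy'H' := hy'H
  rw [hHeq] at hy'H'
  simp only [Set.mem_iUnion, Set.mem_image] at hy'H'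
  obtain ⟨a, ha, a', ha', t₀, ht₀, hy'⟩ := hy'H'
  have hΓbb' : IsGeodesicFrom (Γ b b') b b' := hΓ b hb b' hb'
  have hΓaa' : IsGeodesicFrom (Γ a a') a a' := hΓ a ha a' ha'
  have hΓab' : IsGeodesicFrom (Γ a b') a b' := hΓ a ha b' hb'
  -- geodesic from y to y'
  obtain ⟨γh, hγh⟩ := hgeo y y'
  -- geodesic from y to a
  obtain ⟨gya, hgya⟩ := hgeo y a
  -- geodesic from y' to a within H (reversed subsegment of Γ a a')
  have hg3 : IsGeodesicFrom (fun u => Γ a a' (t₀ - u)) y' a := by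
    have := geod_backward hΓaa' ht₀
    rwa [hy'] at this
  have hdy'a : dist y' a = t₀ := by
    rw [← hy']; exact geod_dist_left hΓaa' ht₀
  -- geodesic from y to b' within H (forward subsegment of Γ b b')
  have hg1 : IsGeodesicFrom (fun u => Γ b b' (s₀ + u)) y b' := by
    have := geod_forward hΓbb' hs₀
    rwa [hy] at this
  have hdyb' : dist y b' = dist b b' - s₀ := by
    rw [← hy]; exact geod_dist_right hΓbb' hs₀
  -- membership lemmas
  have hmemA : ∀ p q : X, p ∈ A → q ∈ A → ∀ v ∈ Set.Icc (0:ℝ) (dist p q),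
      Γ p q v ∈ H := by
    intro p q hp hq v hv
    rw [hHeq]
    simp only [Set.mem_iUnion, Set.mem_image]
    exact ⟨p, hp, q, hq, v, hv, rfl⟩
  -- key quasiconvexity estimate: points of γh are within 8δ of H
  have key : ∀ t ∈ Set.Icc (0:ℝ) (dist y y'), Metric.infDist (γh t) H ≤ 8 * δ := by
    intro t ht
    obtain ⟨u, hu⟩ := slim_triangle hδ hX hγh hgya hg3 ht
    rcases hu with ⟨hu1, hu2⟩ | ⟨hu1, hu2⟩
    · -- γh t near gya u; now run triangle (y, a, b')
      obtain ⟨v, hv⟩ := slim_triangle hδ hX hgya hg1 hΓab' hu1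
      rcases hv with ⟨hv1, hv2⟩ | ⟨hv1, hv2⟩
      · -- point on segment y → b' ⊆ H
        have hmem : Γ b b' (s₀ + v) ∈ H := by
          apply hmemA b b' hb hb'
          rw [hdyb'] at hv1
          exact ⟨by linarith [hv1.1, hs₀.1], by linarith [hv1.2]⟩
        calc Metric.infDist (γh t) H ≤ dist (γh t) (Γ b b' (s₀ + v)) :=
              Metric.infDist_le_dist_of_mem hmem
          _ ≤ dist (γh t) (gya u) + dist (gya u) (Γ b b' (s₀ + v)) := dist_triangle _ _ _
          _ ≤ 8 * δ := by linarith
      · -- point on Γ a b' ⊆ H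
        have hmem : Γ a b' v ∈ H := hmemA a b' ha hb' v hv1
        calc Metric.infDist (γh t) H ≤ dist (γh t) (Γ a b' v) :=
              Metric.infDist_le_dist_of_mem hmem
          _ ≤ dist (γh t) (gya u) + dist (gya u) (Γ a b' v) := dist_triangle _ _ _
          _ ≤ 8 * δ := by linarith
    · -- point on segment y' → a ⊆ H
      have hmem : Γ a a' (t₀ - u) ∈ H := by
        apply hmemA a a' ha ha'
        rw [hdy'a] at hu1
        exact ⟨by linarith [hu1.2], by linarith [hu1.1, ht₀.2]⟩
      calc Metric.infDist (γh t) H ≤ dist (γh t) (Γ a a' (t₀ - u)) :=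
            Metric.infDist_le_dist_of_mem hmem
        _ ≤ 8 * δ := by linarith [hu2, hδ]
  -- final argument
  by_cases hD : dist y y' ≤ 20 * δ + 1
  · linarith
  · push_neg at hD
    obtain ⟨t, htdef⟩ : ∃ t : ℝ, t = 10 * δ + 1 / 2 := ⟨_, rfl⟩
    have ht : t ∈ Set.Icc (0:ℝ) (dist y y') := ⟨by linarith, by linarith⟩
    have hq := key t ht
    obtain ⟨m', hm'H, hmm'⟩ := (Metric.infDist_lt_iff hHne).mp
      (lt_of_le_of_lt hq (by linarith : 8 * δ < 8 * δ + 1 / 4))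
    have h1 : dist x y ≤ dist x m' := hxy ▸ Metric.infDist_le_dist_of_mem hm'H
    have hmy : dist (γh t) y = t := geod_dist_left hγh ht
    have hmy' : dist (γh t) y' = dist y y' - t := geod_dist_right hγh ht
    have hxm : dist x y - (8 * δ + 1 / 4) ≤ dist x (γh t) := by
      have htr := dist_triangle x (γh t) m'
      linarith
    have h4 := hX x (γh t) y y'
    rw [hmy, hmy'] at h4
    rcases le_total (dist x y + (dist y y' - t)) (dist x y' + t) with hc | hc
    · rw [max_eq_right hc] at h4
      linarith
    · rw [max_eq_left hc] at h4
      linarith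
end

section
/- For every δ ≥ 0 and every N ∈ ℕ there exist K ≥ 1 and C ≥ 0, depending only on δ and N, such that: if X is a δ-hyperbolic geodesic metric space, A and A' are nonempty finite subsets of X each with at most N elements, and H and H' are geodesic hulls of A and A' respectively, then d_H(H, H') ≤ K · d_H(A, A') + C, where d_H denotes Hausdorff distance. (Lemma 5.1(3) of the paper: the map A ↦ hull(A) is coarsely Lipschitz in the Hausdorff metric.) -/
universe u

/-- Any point is within `(x|y)_p + 2δ` of some point on a geodesic from `a` to `b`. -/
lemma point_near_geodesic {X : Type*} [MetricSpace X] {δ : ℝ} (hX : DeltaHyperbolic X δ)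
    {γ : ℝ → X} {a b : X} (hγ : IsGeodesicFrom γ a b) (p : X) :
    ∃ t ∈ Set.Icc (0 : ℝ) (dist a b),
      dist p (γ t) ≤ (dist p a + dist p b - dist a b) / 2 + 2 * δ := by
  obtain ⟨h0, hd, hiso⟩ := hγ
  set t0 : ℝ := (dist a b + dist p a - dist p b) / 2 with ht0def
  have htri1 : dist p b ≤ dist p a + dist a b := dist_triangle p a b
  have htri2 : dist p a ≤ dist p b + dist a b := by
    have := dist_triangle p b a; rw [dist_comm b a] at this; linarith
  have ht0 : t0 ∈ Set.Icc (0 : ℝ) (dist a b) := ⟨by simp [ht0def]; linarith, by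
    simp only [ht0def]; linarith⟩
  refine ⟨t0, ht0, ?_⟩
  have hz : (0 : ℝ) ∈ Set.Icc (0 : ℝ) (dist a b) := ⟨le_refl _, dist_nonneg⟩
  have he : dist a b ∈ Set.Icc (0 : ℝ) (dist a b) := ⟨dist_nonneg, le_refl _⟩
  have h1 : dist (γ t0) a = t0 := by
    have h := hiso t0 ht0 0 hz; rw [h0] at h
    rw [h, sub_zero, abs_of_nonneg ht0.1]
  have h2 : dist (γ t0) b = dist a b - t0 := by
    have h := hiso t0 ht0 (dist a b) he; rw [hd] at h
    rw [h, abs_sub_comm, abs_of_nonneg (by linarith [ht0.2])]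
  have hmax : max (dist p a + dist (γ t0) b) (dist p b + dist (γ t0) a)
      ≤ (dist p a + dist p b + dist a b) / 2 := by
    rw [h1, h2]; apply max_le <;> simp only [ht0def] <;> linarith
  have hhyp := hX p (γ t0) a b
  have : dist p (γ t0) = dist (γ t0) p := dist_comm _ _
  linarith [hhyp]

/-- One-sided estimate: every point of a hull of `A` is within
`2 d_H(A,A') + 2δ` of a hull of `A'`. -/
lemma hull_infDist_le {X : Type*} [MetricSpace X] {δ : ℝ} (hX : DeltaHyperbolic X δ)
    (A A' : Finset X) (hA' : A'.Nonempty) (H H' : Set X)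
    (hH : IsGeodesicHull (↑A) H) (hH' : IsGeodesicHull (↑A') H') :
    ∀ p ∈ H, Metric.infDist p H' ≤
      2 * Metric.hausdorffDist (A : Set X) (A' : Set X) + 2 * δ := by
  intro p hp
  set r := Metric.hausdorffDist (A : Set X) (A' : Set X) with hr
  obtain ⟨γ, hγ, hHeq⟩ := hH
  obtain ⟨γ', hγ', hH'eq⟩ := hH'
  rw [hHeq] at hp
  simp only [Set.mem_iUnion, Set.mem_image] at hp
  obtain ⟨a, ha, b, hb, t, ht, hpt⟩ := hp
  -- distances from p to the endpoints a, b
  obtain ⟨g0, gd, giso⟩ := hγ a ha b hb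
  have hz : (0 : ℝ) ∈ Set.Icc (0 : ℝ) (dist a b) := ⟨le_refl _, dist_nonneg⟩
  have he : dist a b ∈ Set.Icc (0 : ℝ) (dist a b) := ⟨dist_nonneg, le_refl _⟩
  have hpa : dist p a = t := by
    have h := giso t ht 0 hz; rw [g0, hpt] at h
    rw [h, sub_zero, abs_of_nonneg ht.1]
  have hpb : dist p b = dist a b - t := by
    have h := giso t ht (dist a b) he; rw [gd, hpt] at h
    rw [h, abs_sub_comm, abs_of_nonneg (by linarith [ht.2])]
  -- nearest points in A'
  have hEne : EMetric.hausdorffEdist (A : Set X) (A' : Set X) ≠ ⊤ :=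
    Metric.hausdorffEdist_ne_top_of_nonempty_of_bounded
      (by exact_mod_cast (A.nonempty_of_ne_empty (by rintro rfl; simp at ha)))
      (by exact_mod_cast hA') A.finite_toSet.isBounded A'.finite_toSet.isBounded
  have hcomp : IsCompact (A' : Set X) := A'.finite_toSet.isCompact
  have hA'ne : (A' : Set X).Nonempty := by exact_mod_cast hA'
  obtain ⟨a', ha', haa'⟩ := hcomp.exists_infDist_eq_dist hA'ne a
  obtain ⟨b', hb', hbb'⟩ := hcomp.exists_infDist_eq_dist hA'ne b
  have hra : dist a a' ≤ r := by
    rw [← haa']; exact Metric.infDist_le_hausdorffDist_of_mem (by exact_mod_cast ha) hEne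
  have hrb : dist b b' ≤ r := by
    rw [← hbb']; exact Metric.infDist_le_hausdorffDist_of_mem (by exact_mod_cast hb) hEne
  -- point on geodesic from a' to b' close to p
  obtain ⟨s, hs, hps⟩ := point_near_geodesic hX (hγ' a' ha' b' hb') p
  have hmem : γ' a' b' s ∈ H' := by
    rw [hH'eq]
    simp only [Set.mem_iUnion, Set.mem_image]
    exact ⟨a', ha', b', hb', s, hs, rfl⟩
  have h5 : Metric.infDist p H' ≤ dist p (γ' a' b' s) :=
    Metric.infDist_le_dist_of_mem hmem
  have h6 : dist p a' ≤ dist p a + dist a a' := dist_triangle p a a'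
  have h7 : dist p b' ≤ dist p b + dist b b' := dist_triangle p b b'
  have h8 : dist a b ≤ dist a a' + dist a' b' + dist b' b := dist_triangle4 a a' b' b
  have h9 : dist b' b = dist b b' := dist_comm _ _
  linarith

/-- Lemma 5.1(3): the hull construction is coarsely Lipschitz in the Hausdorff
metric. -/
theorem hyperbolic_hulls_coarsely_lipschitz :
    ∀ (δ : ℝ), 0 ≤ δ → ∀ N : ℕ, ∃ K C : ℝ, 1 ≤ K ∧ 0 ≤ C ∧
      ∀ (X : Type u) [MetricSpace X], DeltaHyperbolic X δ → GeodesicSpace X →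
        ∀ (A A' : Finset X), A.Nonempty → A.card ≤ N → A'.Nonempty → A'.card ≤ N →
          ∀ H H' : Set X, IsGeodesicHull (↑A) H → IsGeodesicHull (↑A') H' →
            Metric.hausdorffDist H H' ≤ K * Metric.hausdorffDist (A : Set X) (A' : Set X) + C := by
  intro δ hδ N
  refine ⟨2, 2 * δ, by norm_num, by linarith, ?_⟩
  intro X _ hX _ A A' hA _ hA' _ H H' hH hH'
  have hrnn : 0 ≤ Metric.hausdorffDist (A : Set X) (A' : Set X) :=
    Metric.hausdorffDist_nonneg
  apply Metric.hausdorffDist_le_of_infDist (by linarith)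
  · exact hull_infDist_le hX A A' hA' H H' hH hH'
  · intro x hx
    have := hull_infDist_le hX A' A hA H' H hH' hH x hx
    rwa [Metric.hausdorffDist_comm] at this
end

section
/- For every δ ≥ 0 and every Q ≥ 0 there exist K ≥ 1 and C ≥ 0, depending only on δ and Q, with the following property: if X is a δ-hyperbolic geodesic metric space, B and B' are nonempty Q-quasiconvex subsets of X with Metric.hausdorffEdist B B' < ∞, x, x' ∈ X, p ∈ B satisfies dist x p ≤ Metric.infDist x B + 1, and p' ∈ B' satisfies dist x' p' ≤ Metric.infDist x' B' + 1, then dist p p' ≤ K · (dist x x' + d_H(B, B')) + C. (Lemma 5.1(4) of the paper: the nearest point retraction onto a quasiconvex set is coarsely Lipschitz jointly in the point and in the set, in terms of Hausdorff distance.) -/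
universe u

/-- Key lemma: if `p` is an almost-nearest point of `x` in a `Q`-quasiconvex set `B`
in a `δ`-hyperbolic geodesic space, then `p` is almost on any geodesic from `x` to a
point of `B`. -/
lemma almost_nearest_key {X : Type u} [MetricSpace X] {δ Q : ℝ}
    (hyp : DeltaHyperbolic X δ) (geo : GeodesicSpace X)
    {B : Set X} (hB : IsQuasiconvexSet Q B)
    (x : X) {p : X} (hp : p ∈ B) (hnear : dist x p ≤ Metric.infDist x B + 1) :
    ∀ b ∈ B, dist x p + dist p b ≤ dist x b + (2*Q + 4*δ + 2) := by
  intro b hb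
  obtain ⟨γ, hγ⟩ := geo p b
  obtain ⟨hγ0, hγd, hγiso⟩ := hγ
  set t₀ := (dist x p + dist p b - dist x b)/2 with ht₀
  have htri1 : dist x b ≤ dist x p + dist p b := dist_triangle x p b
  have htri2 : dist x p ≤ dist x b + dist p b := by
    have := dist_triangle x b p
    rw [dist_comm b p] at this; linarith
  have h0 : 0 ≤ t₀ := by rw [ht₀]; linarith
  have h1 : t₀ ≤ dist p b := by rw [ht₀]; linarith
  have hmem : t₀ ∈ Set.Icc (0:ℝ) (dist p b) := ⟨h0, h1⟩
  have hmem0 : (0:ℝ) ∈ Set.Icc (0:ℝ) (dist p b) := ⟨le_refl 0, dist_nonneg⟩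
  have hmemd : dist p b ∈ Set.Icc (0:ℝ) (dist p b) := ⟨dist_nonneg, le_refl _⟩
  have hmp : dist (γ t₀) p = t₀ := by
    have := hγiso t₀ hmem 0 hmem0
    rw [hγ0] at this
    rw [this, sub_zero, abs_of_nonneg h0]
  have hmb : dist (γ t₀) b = dist p b - t₀ := by
    have := hγiso t₀ hmem (dist p b) hmemd
    rw [hγd] at this
    rw [this, abs_of_nonpos (by linarith), neg_sub]
  have hQm : Metric.infDist (γ t₀) B ≤ Q := hB p hp b hb γ ⟨hγ0, hγd, hγiso⟩ t₀ hmem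
  have h4 := hyp x (γ t₀) p b
  have hmax : max (dist x p + dist (γ t₀) b) (dist x b + dist (γ t₀) p)
      = dist x p + dist p b - t₀ := by
    rw [hmp, hmb]
    have e1 : dist x p + (dist p b - t₀) = dist x p + dist p b - t₀ := by ring
    have e2 : dist x b + t₀ = dist x p + dist p b - t₀ := by rw [ht₀]; ring
    rw [e1, e2, max_self]
  rw [hmax] at h4
  have hxm : dist x (γ t₀) ≤ dist x p - t₀ + 2*δ := by linarith
  have hinf : Metric.infDist x B ≤ Metric.infDist (γ t₀) B + dist x (γ t₀) :=
    Metric.infDist_le_infDist_add_dist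
  linarith

/-- Lemma 5.1(4): nearest-point retraction onto quasiconvex sets is coarsely
Lipschitz jointly in the point and the set. -/
theorem nearest_point_retraction_coarsely_lipschitz :
    ∀ (δ : ℝ), 0 ≤ δ → ∀ (Q : ℝ), 0 ≤ Q → ∃ K C : ℝ, 1 ≤ K ∧ 0 ≤ C ∧
      ∀ (X : Type u) [MetricSpace X], DeltaHyperbolic X δ → GeodesicSpace X →
        ∀ B B' : Set X, B.Nonempty → B'.Nonempty →
          IsQuasiconvexSet Q B → IsQuasiconvexSet Q B' →
          EMetric.hausdorffEdist B B' < ⊤ →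
          ∀ x x' : X, ∀ p ∈ B, dist x p ≤ Metric.infDist x B + 1 →
            ∀ p' ∈ B', dist x' p' ≤ Metric.infDist x' B' + 1 →
              dist p p' ≤ K * (dist x x' + Metric.hausdorffDist B B') + C := by
  intro δ hδ Q hQ
  refine ⟨4, 10*δ + 4*Q + 8, by norm_num, by linarith, ?_⟩
  intro X _ hyp geo B B' hBne hB'ne hqB hqB' hfin x x' p hp hxp p' hp' hx'p'
  set h := Metric.hausdorffDist B B' with hh
  have hfin' : EMetric.hausdorffEdist B B' ≠ ⊤ := hfin.ne
  have h0 : 0 ≤ h := Metric.hausdorffDist_nonneg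
  -- choose b ∈ B near p'
  have hinfp' : Metric.infDist p' B ≤ h := by
    have := Metric.infDist_le_hausdorffDist_of_mem hp'
      (by rw [show EMetric.hausdorffEdist B' B = EMetric.hausdorffEdist B B' from Metric.hausdorffEDist_comm]; exact hfin' : EMetric.hausdorffEdist B' B ≠ ⊤)
    rwa [Metric.hausdorffDist_comm] at this
  obtain ⟨b, hbB, hbd⟩ : ∃ b ∈ B, dist p' b < h + 1 := by
    rw [← Metric.infDist_lt_iff hBne]; linarith
  -- choose b' ∈ B' near p
  have hinfp : Metric.infDist p B' ≤ h := Metric.infDist_le_hausdorffDist_of_mem hp hfin'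
  obtain ⟨b', hb'B', hb'd⟩ : ∃ b' ∈ B', dist p b' < h + 1 := by
    rw [← Metric.infDist_lt_iff hB'ne]; linarith
  have key1 := almost_nearest_key hyp geo hqB x hp hxp b hbB
  have key2 := almost_nearest_key hyp geo hqB' x' hp' hx'p' b' hb'B'
  -- four-point condition on x, p', x', p
  have four := hyp x p' x' p
  have hmax : max (dist x x' + dist p' p) (dist x p + dist p' x')
      ≤ dist x x' + dist p' p + (dist x p + dist p' x') :=
    max_le (le_add_of_nonneg_right (by positivity)) (le_add_of_nonneg_left (by positivity))
  -- triangle inequalities and symmetries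
  have t1 : dist p p' ≤ dist p b + dist b p' := dist_triangle p b p'
  have t2 : dist x b ≤ dist x p' + dist p' b := dist_triangle x p' b
  have t3 : dist p p' ≤ dist p b' + dist b' p' := dist_triangle p b' p'
  have t4 : dist x' b' ≤ dist x' p + dist p b' := dist_triangle x' p b'
  have c1 : dist b p' = dist p' b := dist_comm b p'
  have c2 : dist b' p' = dist p' b' := dist_comm b' p'
  have c3 : dist p' p = dist p p' := dist_comm p' p
  have c4 : dist p' x' = dist x' p' := dist_comm p' x'
  have c5 : dist p b' = dist b' p := dist_comm p b'
  have dnn : 0 ≤ dist x x' := dist_nonneg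
  linarith
end

section
/- Let V be a type, G : SimpleGraph V, and n ∈ ℕ. Assume G is (n+2)-clique-free (G.CliqueFree (n+2)), so that the flag complex of G has dimension at most n. Let M be a ℤ/2 n-cycle in the flag complex of G, i.e. a finite set M of finite vertex sets such that every s ∈ M is a clique of G with exactly n+1 vertices, and for every finite vertex set t with exactly n vertices, the number of s ∈ M with t ⊆ s is even. If M is nonempty, then M has at least 2^(n+1) elements. (Lemma 8.2 of the paper: every nontrivial reduced ℤ₂ n-cycle in an n-dimensional flag complex has cardinality at least 2^(n+1).) -/
/-- Lemma 8.2: every nontrivial reduced ℤ₂ n-cycle in an n-dimensional flag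
complex has cardinality at least 2^(n+1). -/
theorem flag_complex_cycle_lower_bound
    {V : Type*} [DecidableEq V] (G : SimpleGraph V) (n : ℕ)
    (hfree : G.CliqueFree (n + 2))
    (M : Finset (Finset V))
    (hsimplices : ∀ s ∈ M, G.IsNClique (n + 1) s)
    (hcycle : ∀ t : Finset V, t.card = n →
      Even ((M.filter fun s => t ⊆ s).card))
    (hne : M.Nonempty) :
    2 ^ (n + 1) ≤ M.card := by
  classical
  -- swap lemma: we can replace any vertex of a simplex in M by a non-adjacent one
  have swap : ∀ s ∈ M, ∀ v ∈ s, ∃ s' ∈ M, v ∉ s' ∧ s.erase v ⊆ s' ∧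
      ∀ w ∈ s', w ∉ s.erase v → ¬ G.Adj v w := by
    intro s hs v hv
    have hcard : s.card = n + 1 := (hsimplices s hs).card_eq
    have htcard : (s.erase v).card = n := by
      rw [Finset.card_erase_of_mem hv, hcard]; rfl
    have heven := hcycle (s.erase v) htcard
    have hsmem : s ∈ M.filter (fun s' => s.erase v ⊆ s') := by
      simp [hs, Finset.erase_subset]
    obtain ⟨s', hs'mem, hne'⟩ : ∃ s' ∈ M.filter (fun s' => s.erase v ⊆ s'), s' ≠ s := by
      by_contra h
      push_neg at h
      have : M.filter (fun s' => s.erase v ⊆ s') = {s} :=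
        Finset.eq_singleton_iff_unique_mem.2 ⟨hsmem, h⟩
      rw [this] at heven
      simp at heven
    rw [Finset.mem_filter] at hs'mem
    obtain ⟨hs'M, hts'⟩ := hs'mem
    have hs'card : s'.card = n + 1 := (hsimplices s' hs'M).card_eq
    have hvns' : v ∉ s' := by
      intro hv'
      have hss' : s ⊆ s' := by
        intro x hx
        rcases eq_or_ne x v with rfl | hxv
        · exact hv'
        · exact hts' (Finset.mem_erase.2 ⟨hxv, hx⟩)
      exact hne' (Finset.eq_of_subset_of_card_le hss' (by rw [hcard, hs'card])).symm
    refine ⟨s', hs'M, hvns', hts', ?_⟩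
    intro w hw hwt hadj
    have hs'eq : s' = insert w (s.erase v) := by
      symm
      apply Finset.eq_of_subset_of_card_le
      · intro x hx
        rcases Finset.mem_insert.1 hx with rfl | hx
        · exact hw
        · exact hts' hx
      · rw [Finset.card_insert_of_notMem hwt, htcard, hs'card]
    apply hfree (insert v s')
    constructor
    · have hclique : G.IsClique (s' : Set V) := (hsimplices s' hs'M).isClique
      rw [Finset.coe_insert]
      apply hclique.insert
      intro b hb hbv
      by_cases hbt : b ∈ s.erase v
      · exact (hsimplices s hs).isClique hv (Finset.mem_of_mem_erase hbt) hbv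
      · have hbw : b = w := by
          rw [hs'eq] at hb
          rcases Finset.mem_insert.1 hb with rfl | h
          · rfl
          · exact absurd h hbt
        subst hbw
        exact hadj
    · rw [Finset.card_insert_of_notMem hvns', hs'card]
  obtain ⟨s0, hs0⟩ := hne
  have hs0card : s0.card = n + 1 := (hsimplices s0 hs0).card_eq
  have hs0clique := (hsimplices s0 hs0).isClique
  -- main induction: for each A ⊆ s0 there is a simplex meeting s0 exactly in s0 \ A
  have main : ∀ A : Finset V, A ⊆ s0 → ∃ s ∈ M, s ∩ s0 = s0 \ A := by
    intro A
    induction A using Finset.induction_on with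
    | empty => intro _; exact ⟨s0, hs0, by simp⟩
    | @insert v A' hvA' ih =>
      intro hsub
      have hvs0 : v ∈ s0 := hsub (Finset.mem_insert_self v A')
      have hA'sub : A' ⊆ s0 := fun x hx => hsub (Finset.mem_insert_of_mem hx)
      obtain ⟨s, hsM, hseq⟩ := ih hA'sub
      have hvs : v ∈ s := by
        have hmem : v ∈ s0 \ A' := Finset.mem_sdiff.2 ⟨hvs0, hvA'⟩
        rw [← hseq] at hmem
        exact (Finset.mem_inter.1 hmem).1
      obtain ⟨s', hs'M, hvns', hsub', hnadj⟩ := swap s hsM v hvs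
      refine ⟨s', hs'M, ?_⟩
      ext w
      simp only [Finset.mem_inter, Finset.mem_sdiff, Finset.mem_insert]
      constructor
      · rintro ⟨hws', hws0⟩
        have hwv : w ≠ v := fun h => hvns' (h ▸ hws')
        have hwse : w ∈ s.erase v := by
          by_contra h
          exact hnadj w hws' h (hs0clique hvs0 hws0 (Ne.symm hwv))
        have hws : w ∈ s := Finset.mem_of_mem_erase hwse
        have hmem : w ∈ s0 \ A' := hseq ▸ Finset.mem_inter.2 ⟨hws, hws0⟩
        exact ⟨hws0, fun h => h.elim (fun h => hwv h)
          (fun h => (Finset.mem_sdiff.1 hmem).2 h)⟩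
      · rintro ⟨hws0, hwA⟩
        push_neg at hwA
        obtain ⟨hwv, hwA'⟩ := hwA
        have hmem : w ∈ s ∩ s0 := hseq ▸ Finset.mem_sdiff.2 ⟨hws0, hwA'⟩
        have hws : w ∈ s := (Finset.mem_inter.1 hmem).1
        exact ⟨hsub' (Finset.mem_erase.2 ⟨hwv, hws⟩), hws0⟩
  -- counting via an injection from the powerset of s0
  have main' : ∀ A : Finset V, ∃ s, A ⊆ s0 → s ∈ M ∧ s ∩ s0 = s0 \ A := by
    intro A
    by_cases h : A ⊆ s0
    · obtain ⟨s, hsM, he⟩ := main A h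
      exact ⟨s, fun _ => ⟨hsM, he⟩⟩
    · exact ⟨∅, fun h' => absurd h' h⟩
  choose f hf using main'
  calc 2 ^ (n + 1) = s0.powerset.card := by rw [Finset.card_powerset, hs0card]
    _ ≤ M.card := by
        apply Finset.card_le_card_of_injOn f
        · intro A hA
          exact (hf A (Finset.mem_powerset.1 hA)).1
        · intro A hA B hB hAB
          have hA' := Finset.mem_powerset.1 (Finset.mem_coe.1 hA)
          have hB' := Finset.mem_powerset.1 (Finset.mem_coe.1 hB)
          have e1 := (hf A hA').2
          have e2 := (hf B hB').2
          rw [hAB, e2] at e1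
          have e3 : s0 \ (s0 \ B) = s0 \ (s0 \ A) := by rw [e1]
          rw [Finset.sdiff_sdiff_eq_self hA', Finset.sdiff_sdiff_eq_self hB'] at e3
          exact e3.symm
end

section
/- Let V be a type, G : SimpleGraph V, and n ≥ 1. Let M be a ℤ/2 n-cycle in the flag complex of G, i.e. a finite set of finite vertex sets such that every s ∈ M is a clique of G with exactly n+1 vertices, and every finite vertex set with exactly n vertices is contained in an even number of members of M. Fix v ∈ V and let M_v = { s \ {v} : s ∈ M and v ∈ s }. Then every member of M_v is a clique of G with exactly n vertices, each adjacent to v, and for every finite vertex set u with exactly n−1 vertices, the number of members of M_v containing u is even; in other words, M_v is a ℤ/2 (n−1)-cycle in the flag complex of the induced graph on the neighbors of v. (Intermediate claim in the proof of Lemma 8.2 of the paper: the link of a vertex in a ℤ₂ cycle is a ℤ₂ cycle of one lower dimension.) -/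
/-- The link of a vertex in a ℤ₂ n-cycle in a flag complex is a ℤ₂ (n-1)-cycle
in the link of the vertex (intermediate claim in Lemma 8.2). -/
theorem link_of_cycle_is_cycle
    {V : Type*} [DecidableEq V] (G : SimpleGraph V) (n : ℕ) (hn : 1 ≤ n)
    (M : Finset (Finset V))
    (hsimplices : ∀ s ∈ M, G.IsNClique (n + 1) s)
    (hcycle : ∀ t : Finset V, t.card = n →
      Even ((M.filter fun s => t ⊆ s).card))
    (v : V)
    (Mv : Finset (Finset V))
    (hMv : Mv = (M.filter fun s => v ∈ s).image fun s => s.erase v) :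
    (∀ t ∈ Mv, G.IsNClique n t ∧ ∀ w ∈ t, G.Adj v w) ∧
    (∀ u : Finset V, u.card = n - 1 →
      Even ((Mv.filter fun t => u ⊆ t).card)) := by
  subst hMv
  constructor
  · intro t ht
    simp only [Finset.mem_image, Finset.mem_filter] at ht
    obtain ⟨s, ⟨hsM, hvs⟩, rfl⟩ := ht
    obtain ⟨hclique, hcard⟩ := hsimplices s hsM
    refine ⟨⟨hclique.subset (by exact_mod_cast Finset.erase_subset _ _), ?_⟩, ?_⟩
    · rw [Finset.card_erase_of_mem hvs, hcard]; omega
    · intro w hw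
      have h := Finset.mem_erase.mp hw
      exact hclique (by exact_mod_cast hvs)
        (by exact_mod_cast Finset.erase_subset _ _ hw) h.1.symm
  · intro u hu
    by_cases hvu : v ∈ u
    · have hempty : (((M.filter fun s => v ∈ s).image fun s => s.erase v).filter
          fun t => u ⊆ t) = ∅ := by
        rw [Finset.filter_eq_empty_iff]
        rintro t ht hsub
        simp only [Finset.mem_image, Finset.mem_filter] at ht
        obtain ⟨s, _, rfl⟩ := ht
        exact Finset.notMem_erase v s (hsub hvu)
      simp [hempty]
    · rw [Finset.filter_image, Finset.card_image_of_injOn]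
      · rw [Finset.filter_filter]
        have hset : (M.filter fun s => v ∈ s ∧ u ⊆ s.erase v)
            = M.filter fun s => insert v u ⊆ s := by
          apply Finset.filter_congr
          intro s _
          constructor
          · rintro ⟨hvs, hus⟩
            exact Finset.insert_subset hvs (hus.trans (Finset.erase_subset _ _))
          · intro h
            refine ⟨h (Finset.mem_insert_self _ _), ?_⟩
            exact (Finset.subset_erase).mpr
              ⟨(Finset.subset_insert _ _).trans h, hvu⟩
        rw [hset]
        apply hcycle
        rw [Finset.card_insert_of_notMem hvu, hu]
        omega
      · intro a ha b hb hab
        simp only [Finset.coe_filter, Set.mem_setOf_eq, Finset.mem_filter] at ha hb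
        have h2 : insert v (a.erase v) = insert v (b.erase v) :=
          congrArg (insert v) hab
        rwa [Finset.insert_erase ha.1.2, Finset.insert_erase hb.1.2] at h2
end

section
/- Let V be a type and G : SimpleGraph V a tree (G.IsTree). Let A, B ⊆ V be sets such that the induced subgraph of G on A is connected and the induced subgraph of G on B is connected, and suppose A ∩ B is nonempty. Then for every x ∈ A and every y ∈ B there exists z ∈ A ∩ B with G.dist x y = G.dist x z + G.dist z y. (The intersecting case of Lemma 3.6 of the paper ('junctures in tree products') for a single tree: two intersecting subtrees have their common subtree as junctures, with exact distance additivity through the intersection.) -/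
open SimpleGraph Walk

private lemma tree_path_length {V : Type*} {G : SimpleGraph V} (hT : G.IsTree)
    {u v : V} (p : G.Walk u v) (hp : p.IsPath) : p.length = G.dist u v := by
  classical
  obtain ⟨q, hq⟩ := hT.isConnected.exists_walk_length_eq_dist u v
  have hpq : p = q.bypass := (hT.existsUnique_path u v).unique hp q.bypass_isPath
  have h1 : p.length ≤ G.dist u v := by
    rw [hpq, ← hq]; exact q.length_bypass_le
  exact le_antisymm h1 (SimpleGraph.dist_le p)

private lemma tree_convex {V : Type*} {G : SimpleGraph V} (hT : G.IsTree)
    {A : Set V} (hAconn : (G.induce A).Connected)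
    {u v : V} (hu : u ∈ A) (hv : v ∈ A)
    (p : G.Walk u v) (hp : p.IsPath) : ∀ z ∈ p.support, z ∈ A := by
  classical
  obtain ⟨W⟩ := hAconn ⟨u, hu⟩ ⟨v, hv⟩
  let f : G.induce A →g G := ⟨Subtype.val, fun {a b} h => h⟩
  have hW : ∀ z ∈ (W.map f).support, z ∈ A := by
    intro z hz
    rw [Walk.support_map] at hz
    obtain ⟨⟨z', hz'⟩, _, rfl⟩ := List.mem_map.mp hz
    exact hz'
  have hpb : p = (W.map f).bypass :=
    (hT.existsUnique_path u v).unique hp (W.map f).bypass_isPath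
  intro z hz
  exact hW z ((W.map f).support_bypass_subset (hpb ▸ hz))

private lemma geodesic_split {V : Type*} [DecidableEq V] {G : SimpleGraph V} (hconn : G.Connected)
    {u v : V} (p : G.Walk u v) (hp : p.length = G.dist u v)
    {z : V} (hz : z ∈ p.support) :
    (p.takeUntil z hz).length = G.dist u z ∧ (p.dropUntil z hz).length = G.dist z v := by
  have hsum : (p.takeUntil z hz).length + (p.dropUntil z hz).length = p.length := by
    conv_rhs => rw [← p.take_spec hz]
    rw [Walk.length_append]
  have h1 : G.dist u z ≤ (p.takeUntil z hz).length := SimpleGraph.dist_le _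
  have h2 : G.dist z v ≤ (p.dropUntil z hz).length := SimpleGraph.dist_le _
  have h3 : G.dist u v ≤ G.dist u z + G.dist z v := hconn.dist_triangle
  omega

/-- Intersecting case of Lemma 3.6 for a single tree: distances between two
intersecting connected subsets of a tree split through the intersection. -/
theorem intersecting_subtrees_distance_through_intersection
    {V : Type*} (G : SimpleGraph V) (hT : G.IsTree)
    (A B : Set V)
    (hAconn : (G.induce A).Connected) (hBconn : (G.induce B).Connected)
    (hAB : (A ∩ B).Nonempty) :
    ∀ x ∈ A, ∀ y ∈ B, ∃ z ∈ A ∩ B,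
      G.dist x y = G.dist x z + G.dist z y := by
  classical
  obtain ⟨w, hwA, hwB⟩ := hAB
  have hconn := hT.isConnected
  intro x hx y hy
  -- geodesic path from x to y
  obtain ⟨p0, hp0⟩ := hconn.exists_walk_length_eq_dist x y
  set p : G.Walk x y := p0.bypass with hpdef
  have hppath : p.IsPath := p0.bypass_isPath
  have hplen : p.length = G.dist x y := tree_path_length hT p hppath
  -- choose z on p minimizing distance to w
  have hne : p.support ≠ [] := p.support_ne_nil
  obtain ⟨z, hzarg⟩ : ∃ z, z ∈ p.support.argmin (fun u => G.dist u w) := by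
    cases h : p.support.argmin (fun u => G.dist u w) with
    | none => exact absurd (List.argmin_eq_none.mp h) hne
    | some z => exact ⟨z, rfl⟩
  have hzp : z ∈ p.support := List.argmin_mem hzarg
  have hzmin : ∀ u ∈ p.support, G.dist z w ≤ G.dist u w :=
    fun u hu => List.le_of_mem_argmin hu hzarg
  obtain ⟨h1, h2⟩ := geodesic_split hconn p hplen hzp
  set p1 := p.takeUntil z hzp with hp1def
  set p2 := p.dropUntil z hzp with hp2def
  have hp1path : p1.IsPath := hppath.takeUntil hzp
  have hp2path : p2.IsPath := hppath.dropUntil hzp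
  -- geodesic path from z to w
  obtain ⟨g0, hg0⟩ := hconn.exists_walk_length_eq_dist z w
  set g : G.Walk z w := g0.bypass with hgdef
  have hgpath : g.IsPath := g0.bypass_isPath
  have hglen : g.length = G.dist z w := tree_path_length hT g hgpath
  -- g meets p only in z
  have hkey : ∀ u ∈ g.support, u ∈ p.support → u = z := by
    intro u hug hup
    obtain ⟨hg1, hg2⟩ := geodesic_split hconn g hglen hug
    have hle := hzmin u hup
    have hdzu : G.dist z u = 0 := by
      have h3 : G.dist z u + G.dist u w = G.dist z w := by
        have := SimpleGraph.dist_le (g.takeUntil u hug)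
        have := SimpleGraph.dist_le (g.dropUntil u hug)
        have hsum : (g.takeUntil u hug).length + (g.dropUntil u hug).length = g.length := by
          conv_rhs => rw [← g.take_spec hug]
          rw [Walk.length_append]
        omega
      omega
    exact (hconn.dist_eq_zero_iff.mp hdzu).symm
  -- appending a prefix of p with g gives a path
  have hApp : ∀ {a : V} (q : G.Walk a z), q.IsPath → (∀ u ∈ q.support, u ∈ p.support) →
      (q.append g).IsPath := by
    intro a q hq hqsub
    rw [Walk.isPath_def, Walk.support_append, List.nodup_append]
    refine ⟨hq.support_nodup, ?_, ?_⟩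
    · have := hgpath.support_nodup
      rw [g.support_eq_cons] at this
      exact this.of_cons
    · intro u huq b hugt hub
      subst hub
      have hug : u ∈ g.support := by
        rw [g.support_eq_cons]; exact List.mem_cons_of_mem _ hugt
      have : u = z := hkey u hug (hqsub u huq)
      subst this
      have := hgpath.support_nodup
      rw [g.support_eq_cons] at this
      exact List.Nodup.notMem this hugt
  -- path from x to w through z
  have hP : (p1.append g).IsPath :=
    hApp p1 hp1path (fun u hu => p.support_takeUntil_subset hzp hu)
  have hQ : (p2.reverse.append g).IsPath := by
    refine hApp p2.reverse hp2path.reverse (fun u hu => ?_)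
    rw [Walk.support_reverse, List.mem_reverse] at hu
    exact p.support_dropUntil_subset hzp hu
  -- z ∈ A
  have hzA : z ∈ A := by
    refine tree_convex hT hAconn hx hwA (p1.append g) hP z ?_
    rw [Walk.mem_support_append_iff]
    exact Or.inl p1.end_mem_support
  -- z ∈ B
  have hzB : z ∈ B := by
    refine tree_convex hT hBconn hy hwB (p2.reverse.append g) hQ z ?_
    rw [Walk.mem_support_append_iff]
    exact Or.inl p2.reverse.end_mem_support
  have hsum : p1.length + p2.length = p.length := by
    conv_rhs => rw [← p.take_spec hzp]
    rw [Walk.length_append]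
  exact ⟨z, ⟨hzA, hzB⟩, by omega⟩
end

section
/- For every δ ≥ 0 there exist K ≥ 1 and C ≥ 0, depending only on δ, with the following property. Let X be a δ-hyperbolic geodesic metric space, let γ₁ be a geodesic from a₁ to b₁ with image G₁, and let γ₂ be a geodesic from a₂ to b₂ with image G₂. Then there exist nonempty closed subintervals I₁ ⊆ [0, dist a₁ b₁] and I₂ ⊆ [0, dist a₂ b₂] such that, setting E₁ = γ₁ '' I₁ and E₂ = γ₂ '' I₂, for all x ∈ G₁ and all y ∈ G₂: dist(x, E₁) + d_H(E₁, E₂) + dist(y, E₂) ≤ K · dist x y + C. (The claim in Section 3.1 of the paper that the family of geodesic segments in a δ-hyperbolic space has junctures, with implicit constants depending only on δ.) -/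
universe u

private lemma geo_mem {X : Type*} [MetricSpace X] {γ : ℝ → X} {a b : X}
    (h : IsGeodesicFrom γ a b) {s t : ℝ} (hs : s ∈ Set.Icc 0 (dist a b))
    (ht : t ∈ Set.Icc 0 (dist a b)) : dist (γ s) (γ t) = |s - t| :=
  h.2.2 s hs t ht

/-- Lemma A: for any `w` there is a point `m` on the geodesic with
`dist w m ≤ (a|b)_w + 2δ`. -/
private lemma lemA {X : Type*} [MetricSpace X] {δ : ℝ} (hX : DeltaHyperbolic X δ)
    {γ : ℝ → X} {a b : X} (h : IsGeodesicFrom γ a b) (w : X) :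
    ∃ m ∈ γ '' Set.Icc 0 (dist a b),
      2 * dist w m ≤ dist w a + dist w b - dist a b + 4 * δ := by
  set L := dist a b with hLdef
  have hL0 : 0 ≤ L := dist_nonneg
  set t' := (dist w a + L - dist w b) / 2 with ht'
  have h1 : dist w b ≤ dist w a + L := dist_triangle w a b
  have h2 : dist w a ≤ dist w b + L := by
    have := dist_triangle w b a
    rw [dist_comm b a] at this
    exact this
  have hmem : t' ∈ Set.Icc (0 : ℝ) L := ⟨by rw [ht']; linarith, by rw [ht']; linarith⟩
  refine ⟨γ t', ⟨t', hmem, rfl⟩, ?_⟩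
  have hma : dist (γ t') a = t' := by
    conv_lhs => rw [← h.1]
    rw [geo_mem h hmem ⟨le_refl 0, hL0⟩, sub_zero, abs_of_nonneg hmem.1]
  have hmb : dist (γ t') b = L - t' := by
    conv_lhs => rw [← h.2.1]
    rw [geo_mem h hmem ⟨hL0, le_refl L⟩, abs_of_nonpos (by linarith [hmem.2]), neg_sub]
  have h4 := hX w (γ t') a b
  rw [hma, hmb] at h4
  have hmax : max (dist w a + (L - t')) (dist w b + t') = dist w a + (L - t') := by
    apply max_eq_left
    rw [ht']
    linarith
  rw [hmax] at h4
  rw [ht'] at h4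
  linarith

private lemma lemA_sub_aux {X : Type*} [MetricSpace X] {δ : ℝ} (hX : DeltaHyperbolic X δ)
    {γ : ℝ → X} {a b : X} (h : IsGeodesicFrom γ a b) {v₁ v₂ : ℝ}
    (hv₁ : v₁ ∈ Set.Icc 0 (dist a b)) (hv₂ : v₂ ∈ Set.Icc 0 (dist a b))
    (hle : v₁ ≤ v₂) (w : X) :
    ∃ m ∈ γ '' Set.Icc 0 (dist a b),
      2 * dist w m ≤ dist w (γ v₁) + dist w (γ v₂) - dist (γ v₁) (γ v₂) + 4 * δ := by
  have hdvv : dist (γ v₁) (γ v₂) = v₂ - v₁ := by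
    rw [geo_mem h hv₁ hv₂, abs_of_nonpos (by linarith), neg_sub]
  have hgeoβ : IsGeodesicFrom (fun r => γ (v₁ + r)) (γ v₁) (γ v₂) := by
    refine ⟨by simp, ?_, ?_⟩
    · show γ (v₁ + dist (γ v₁) (γ v₂)) = γ v₂
      rw [hdvv]
      congr 1
      ring
    · intro s hs t ht
      rw [hdvv] at hs ht
      have hs' : v₁ + s ∈ Set.Icc 0 (dist a b) :=
        ⟨add_nonneg hv₁.1 hs.1, by linarith [hs.2, hv₂.2]⟩
      have ht' : v₁ + t ∈ Set.Icc 0 (dist a b) :=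
        ⟨add_nonneg hv₁.1 ht.1, by linarith [ht.2, hv₂.2]⟩
      show dist (γ (v₁ + s)) (γ (v₁ + t)) = |s - t|
      rw [geo_mem h hs' ht']
      congr 1
      ring
  obtain ⟨m, hm, hm2⟩ := lemA hX hgeoβ w
  refine ⟨m, ?_, hm2⟩
  obtain ⟨r, hr, rfl⟩ := hm
  rw [hdvv] at hr
  exact ⟨v₁ + r, ⟨add_nonneg hv₁.1 hr.1, by linarith [hr.2, hv₂.2]⟩, rfl⟩

private lemma lemA_sub {X : Type*} [MetricSpace X] {δ : ℝ} (hX : DeltaHyperbolic X δ)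
    {γ : ℝ → X} {a b : X} (h : IsGeodesicFrom γ a b) {v₁ v₂ : ℝ}
    (hv₁ : v₁ ∈ Set.Icc 0 (dist a b)) (hv₂ : v₂ ∈ Set.Icc 0 (dist a b)) (w : X) :
    ∃ m ∈ γ '' Set.Icc 0 (dist a b),
      2 * dist w m ≤ dist w (γ v₁) + dist w (γ v₂) - dist (γ v₁) (γ v₂) + 4 * δ := by
  rcases le_total v₁ v₂ with hle | hle
  · exact lemA_sub_aux hX h hv₁ hv₂ hle w
  · obtain ⟨m, hm, hm2⟩ := lemA_sub_aux hX h hv₂ hv₁ hle w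
    refine ⟨m, hm, ?_⟩
    rw [dist_comm (γ v₂) (γ v₁)] at hm2
    linarith

/-- Claim C: a near-projection of a point of one geodesic onto the other lands
within `D + 4δ + 2` of the first geodesic, where `D + 1` bounds some pair distance. -/
private lemma claimC {X : Type*} [MetricSpace X] {δ D : ℝ} (hX : DeltaHyperbolic X δ)
    {γ γ' : ℝ → X} {a b a' b' : X}
    (h : IsGeodesicFrom γ a b) (h' : IsGeodesicFrom γ' a' b')
    {u v : ℝ} (hu : u ∈ Set.Icc 0 (dist a b)) (hv : v ∈ Set.Icc 0 (dist a' b'))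
    (hpq : dist (γ u) (γ' v) ≤ D + 1)
    {s τ : ℝ} (hs : s ∈ Set.Icc 0 (dist a b)) (hτ : τ ∈ Set.Icc 0 (dist a' b'))
    (hc : dist (γ s) (γ' τ) ≤ Metric.infDist (γ s) (γ' '' Set.Icc 0 (dist a' b')) + 1) :
    Metric.infDist (γ' τ) (γ '' Set.Icc 0 (dist a b)) ≤ D + 4 * δ + 2 := by
  obtain ⟨m, hm, hm2⟩ := lemA_sub hX h' hτ hv (γ s)
  have h1 : Metric.infDist (γ s) (γ' '' Set.Icc 0 (dist a' b')) ≤ dist (γ s) m :=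
    Metric.infDist_le_dist_of_mem hm
  obtain ⟨m', hm', hm'2⟩ := lemA_sub hX h hs hu (γ' τ)
  have h2 : Metric.infDist (γ' τ) (γ '' Set.Icc 0 (dist a b)) ≤ dist (γ' τ) m' :=
    Metric.infDist_le_dist_of_mem hm'
  have dc1 : dist (γ' τ) (γ s) = dist (γ s) (γ' τ) := dist_comm _ _
  have dc2 : dist (γ' v) (γ u) = dist (γ u) (γ' v) := dist_comm _ _
  have tA : dist (γ' τ) (γ u) ≤ dist (γ' τ) (γ' v) + dist (γ' v) (γ u) := dist_triangle _ _ _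
  have tB : dist (γ s) (γ' v) ≤ dist (γ s) (γ u) + dist (γ u) (γ' v) := dist_triangle _ _ _
  rw [dc1] at hm'2
  linarith

/-- From any point on the first geodesic, there is a parameter on the second
geodesic which is a near-projection and lies near the first geodesic. -/
private lemma keyLem {X : Type*} [MetricSpace X] {δ D : ℝ} (hX : DeltaHyperbolic X δ)
    {γ γ' : ℝ → X} {a b a' b' : X}
    (h : IsGeodesicFrom γ a b) (h' : IsGeodesicFrom γ' a' b')
    {u v : ℝ} (hu : u ∈ Set.Icc 0 (dist a b)) (hv : v ∈ Set.Icc 0 (dist a' b'))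
    (hpq : dist (γ u) (γ' v) ≤ D + 1)
    {σ : ℝ} (hσ : σ ∈ Set.Icc 0 (dist a b)) :
    ∃ τ ∈ Set.Icc (0 : ℝ) (dist a' b'),
      Metric.infDist (γ' τ) (γ '' Set.Icc 0 (dist a b)) ≤ D + 4 * δ + 2 ∧
      dist (γ σ) (γ' τ) ≤ Metric.infDist (γ σ) (γ' '' Set.Icc 0 (dist a' b')) + 1 := by
  have hne : (γ' '' Set.Icc 0 (dist a' b')).Nonempty :=
    ⟨γ' 0, 0, ⟨le_refl 0, dist_nonneg⟩, rfl⟩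
  have hlt : Metric.infDist (γ σ) (γ' '' Set.Icc 0 (dist a' b')) <
      Metric.infDist (γ σ) (γ' '' Set.Icc 0 (dist a' b')) + 1 := by linarith
  obtain ⟨c, hcmem, hc⟩ := (Metric.infDist_lt_iff hne).mp hlt
  obtain ⟨τ, hτ, rfl⟩ := hcmem
  exact ⟨τ, hτ, claimC hX h h' hu hv hpq hσ hτ hc.le, hc.le⟩

/-- Points between two parameters that are `W`-close to the other geodesic are
`2(W+1)+2δ`-close to it. -/
private lemma midBound {X : Type*} [MetricSpace X] {δ W : ℝ} (hX : DeltaHyperbolic X δ)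
    {γ γ' : ℝ → X} {a b a' b' : X}
    (h : IsGeodesicFrom γ a b) (h' : IsGeodesicFrom γ' a' b')
    {σ₁ σ₂ σ : ℝ} (hσ₁ : σ₁ ∈ Set.Icc 0 (dist a b)) (hσ₂ : σ₂ ∈ Set.Icc 0 (dist a b))
    (hf₁ : Metric.infDist (γ σ₁) (γ' '' Set.Icc 0 (dist a' b')) ≤ W)
    (hf₂ : Metric.infDist (γ σ₂) (γ' '' Set.Icc 0 (dist a' b')) ≤ W)
    (h12 : σ₁ ≤ σ) (h23 : σ ≤ σ₂) :
    Metric.infDist (γ σ) (γ' '' Set.Icc 0 (dist a' b')) ≤ 2 * (W + 1) + 2 * δ := by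
  have hσ : σ ∈ Set.Icc 0 (dist a b) := ⟨le_trans hσ₁.1 h12, le_trans h23 hσ₂.2⟩
  have hne : (γ' '' Set.Icc 0 (dist a' b')).Nonempty :=
    ⟨γ' 0, 0, ⟨le_refl 0, dist_nonneg⟩, rfl⟩
  obtain ⟨q₁, hq₁mem, hq₁⟩ := (Metric.infDist_lt_iff hne).mp
    (show Metric.infDist (γ σ₁) (γ' '' Set.Icc 0 (dist a' b')) < W + 1 by linarith)
  obtain ⟨v₁, hv₁, rfl⟩ := hq₁mem
  obtain ⟨q₂, hq₂mem, hq₂⟩ := (Metric.infDist_lt_iff hne).mp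
    (show Metric.infDist (γ σ₂) (γ' '' Set.Icc 0 (dist a' b')) < W + 1 by linarith)
  obtain ⟨v₂, hv₂, rfl⟩ := hq₂mem
  obtain ⟨m, hm, hm2⟩ := lemA_sub hX h' hv₁ hv₂ (γ σ)
  have hinf : Metric.infDist (γ σ) (γ' '' Set.Icc 0 (dist a' b')) ≤ dist (γ σ) m :=
    Metric.infDist_le_dist_of_mem hm
  have d1 : dist (γ σ) (γ σ₁) = σ - σ₁ := by
    rw [geo_mem h hσ hσ₁, abs_of_nonneg (by linarith)]
  have d2 : dist (γ σ) (γ σ₂) = σ₂ - σ := by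
    rw [geo_mem h hσ hσ₂, abs_of_nonpos (by linarith), neg_sub]
  have d3 : dist (γ σ₁) (γ σ₂) = σ₂ - σ₁ := by
    rw [geo_mem h hσ₁ hσ₂, abs_of_nonpos (by linarith), neg_sub]
  have t1 : dist (γ σ) (γ' v₁) ≤ dist (γ σ) (γ σ₁) + dist (γ σ₁) (γ' v₁) := dist_triangle _ _ _
  have t2 : dist (γ σ) (γ' v₂) ≤ dist (γ σ) (γ σ₂) + dist (γ σ₂) (γ' v₂) := dist_triangle _ _ _
  have t3 : dist (γ σ₁) (γ σ₂) ≤ dist (γ σ₁) (γ' v₁) + dist (γ' v₁) (γ' v₂) + dist (γ' v₂) (γ σ₂) :=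
    dist_triangle4 _ _ _ _
  have hc : dist (γ' v₂) (γ σ₂) = dist (γ σ₂) (γ' v₂) := dist_comm _ _
  linarith

/-- Every point of the geodesic whose parameter lies between `sInf T` and `sSup T`,
where `T` is the set of parameters `W`-close to the other geodesic, is
`2(W+1)+2δ`-close to the other geodesic. -/
private lemma segBound {X : Type*} [MetricSpace X] {δ W : ℝ} (hδ : 0 ≤ δ) (hW : 0 ≤ W)
    (hX : DeltaHyperbolic X δ) {γ γ' : ℝ → X} {a b a' b' : X}
    (h : IsGeodesicFrom γ a b) (h' : IsGeodesicFrom γ' a' b')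
    {T : Set ℝ}
    (hT : T = {σ | σ ∈ Set.Icc 0 (dist a b) ∧
      Metric.infDist (γ σ) (γ' '' Set.Icc 0 (dist a' b')) ≤ W})
    (hTne : T.Nonempty) {σ : ℝ} (hσ : σ ∈ Set.Icc (sInf T) (sSup T)) :
    Metric.infDist (γ σ) (γ' '' Set.Icc 0 (dist a' b')) ≤ 2 * (W + 1) + 2 * δ := by
  have hmemT : ∀ x ∈ T, x ∈ Set.Icc 0 (dist a b) ∧
      Metric.infDist (γ x) (γ' '' Set.Icc 0 (dist a' b')) ≤ W := by
    intro x hx; rw [hT] at hx; exact hx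
  have hσL : σ ∈ Set.Icc 0 (dist a b) := by
    constructor
    · exact le_trans (le_csInf hTne fun x hx => (hmemT x hx).1.1) hσ.1
    · exact le_trans hσ.2 (csSup_le hTne fun x hx => (hmemT x hx).1.2)
  refine le_of_forall_pos_le_add fun η hη => ?_
  obtain ⟨σ₁, hσ₁T, hσ₁⟩ := exists_lt_of_csInf_lt hTne
    (show sInf T < sInf T + η by linarith)
  obtain ⟨σ₂, hσ₂T, hσ₂⟩ := exists_lt_of_lt_csSup hTne
    (show sSup T - η < sSup T by linarith)
  obtain ⟨hσ₁L, hσ₁W⟩ := hmemT σ₁ hσ₁T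
  obtain ⟨hσ₂L, hσ₂W⟩ := hmemT σ₂ hσ₂T
  by_cases hc₁ : σ ≤ σ₁
  · have hd : dist (γ σ) (γ σ₁) = σ₁ - σ := by
      rw [geo_mem h hσL hσ₁L, abs_of_nonpos (by linarith), neg_sub]
    have hlip := Metric.infDist_le_infDist_add_dist
      (x := γ σ) (y := γ σ₁) (s := γ' '' Set.Icc 0 (dist a' b'))
    rw [dist_comm (γ σ) (γ σ₁)] at hlip
    rw [dist_comm (γ σ₁) (γ σ)] at hlip
    rw [hd] at hlip
    have : σ₁ - σ ≤ η := by linarith [hσ.1]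
    linarith
  · by_cases hc₂ : σ₂ ≤ σ
    · have hd : dist (γ σ) (γ σ₂) = σ - σ₂ := by
        rw [geo_mem h hσL hσ₂L, abs_of_nonneg (by linarith)]
      have hlip := Metric.infDist_le_infDist_add_dist
        (x := γ σ) (y := γ σ₂) (s := γ' '' Set.Icc 0 (dist a' b'))
      rw [hd] at hlip
      have : σ - σ₂ ≤ η := by linarith [hσ.2]
      linarith
    · push_neg at hc₁ hc₂
      have := midBound hX h h' hσ₁L hσ₂L hσ₁W hσ₂W hc₁.le hc₂.le
      linarith

/-- Geodesic segments in a δ-hyperbolic space have junctures, with constants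
depending only on δ. -/
theorem geodesics_have_junctures :
    ∀ (δ : ℝ), 0 ≤ δ → ∃ K C : ℝ, 1 ≤ K ∧ 0 ≤ C ∧
      ∀ (X : Type u) [MetricSpace X], DeltaHyperbolic X δ → GeodesicSpace X →
        ∀ (γ₁ γ₂ : ℝ → X) (a₁ b₁ a₂ b₂ : X),
          IsGeodesicFrom γ₁ a₁ b₁ → IsGeodesicFrom γ₂ a₂ b₂ →
          ∃ s₁ t₁ s₂ t₂ : ℝ,
            0 ≤ s₁ ∧ s₁ ≤ t₁ ∧ t₁ ≤ dist a₁ b₁ ∧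
            0 ≤ s₂ ∧ s₂ ≤ t₂ ∧ t₂ ≤ dist a₂ b₂ ∧
            ∀ x ∈ γ₁ '' Set.Icc 0 (dist a₁ b₁), ∀ y ∈ γ₂ '' Set.Icc 0 (dist a₂ b₂),
              Metric.infDist x (γ₁ '' Set.Icc s₁ t₁) +
                Metric.hausdorffDist (γ₁ '' Set.Icc s₁ t₁) (γ₂ '' Set.Icc s₂ t₂) +
                Metric.infDist y (γ₂ '' Set.Icc s₂ t₂)
              ≤ K * dist x y + C := by
  intro δ hδ
  refine ⟨6, 10 * δ + 9, by norm_num, by linarith, ?_⟩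
  intro X _ hX _hgeo γ₁ γ₂ a₁ b₁ a₂ b₂ h₁ h₂
  -- the set of distances between points of the two geodesics, and its infimum D
  set S := {d : ℝ | ∃ s ∈ Set.Icc (0:ℝ) (dist a₁ b₁), ∃ t ∈ Set.Icc (0:ℝ) (dist a₂ b₂),
      d = dist (γ₁ s) (γ₂ t)} with hSdef
  have hSne : S.Nonempty :=
    ⟨dist (γ₁ 0) (γ₂ 0), 0, ⟨le_refl 0, dist_nonneg⟩, 0, ⟨le_refl 0, dist_nonneg⟩, rfl⟩
  have hSbdd : BddBelow S := ⟨0, by rintro d ⟨s, _, t, _, rfl⟩; exact dist_nonneg⟩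
  set D := sInf S with hDdef
  have hD0 : 0 ≤ D := le_csInf hSne (by rintro d ⟨s, _, t, _, rfl⟩; exact dist_nonneg)
  obtain ⟨d₀, hd₀S, hd₀⟩ := exists_lt_of_csInf_lt hSne
    (show sInf S < D + 1 by rw [← hDdef]; linarith)
  obtain ⟨u, hu, v, hv, rfl⟩ := hd₀S
  have hpq : dist (γ₁ u) (γ₂ v) ≤ D + 1 := hd₀.le
  have hpq' : dist (γ₂ v) (γ₁ u) ≤ D + 1 := by rw [dist_comm]; exact hpq
  set W := D + 4 * δ + 2 with hWdef
  have hW0 : 0 ≤ W := by rw [hWdef]; linarith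
  set T₁ := {σ | σ ∈ Set.Icc 0 (dist a₁ b₁) ∧
      Metric.infDist (γ₁ σ) (γ₂ '' Set.Icc 0 (dist a₂ b₂)) ≤ W} with hT₁def
  set T₂ := {σ | σ ∈ Set.Icc 0 (dist a₂ b₂) ∧
      Metric.infDist (γ₂ σ) (γ₁ '' Set.Icc 0 (dist a₁ b₁)) ≤ W} with hT₂def
  have huT : u ∈ T₁ := by
    refine ⟨hu, le_trans (Metric.infDist_le_dist_of_mem ⟨v, hv, rfl⟩) ?_⟩
    rw [hWdef]; linarith
  have hvT : v ∈ T₂ := by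
    refine ⟨hv, le_trans (Metric.infDist_le_dist_of_mem ⟨u, hu, rfl⟩) ?_⟩
    rw [hWdef]; linarith
  have hT₁ne : T₁.Nonempty := ⟨u, huT⟩
  have hT₂ne : T₂.Nonempty := ⟨v, hvT⟩
  have hbb₁ : BddBelow T₁ := ⟨0, fun x hx => hx.1.1⟩
  have hba₁ : BddAbove T₁ := ⟨dist a₁ b₁, fun x hx => hx.1.2⟩
  have hbb₂ : BddBelow T₂ := ⟨0, fun x hx => hx.1.1⟩
  have hba₂ : BddAbove T₂ := ⟨dist a₂ b₂, fun x hx => hx.1.2⟩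
  refine ⟨sInf T₁, sSup T₁, sInf T₂, sSup T₂,
    le_csInf hT₁ne (fun x hx => hx.1.1),
    csInf_le_csSup hT₁ne hbb₁ hba₁,
    csSup_le hT₁ne (fun x hx => hx.1.2),
    le_csInf hT₂ne (fun x hx => hx.1.1),
    csInf_le_csSup hT₂ne hbb₂ hba₂,
    csSup_le hT₂ne (fun x hx => hx.1.2), ?_⟩
  rintro x ⟨s, hs, rfl⟩ y ⟨t, ht, rfl⟩
  have hDxy : D ≤ dist (γ₁ s) (γ₂ t) := csInf_le hSbdd ⟨s, hs, t, ht, rfl⟩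
  -- bound for infDist y E₂
  obtain ⟨τ, hτ, hτinf, hτd⟩ := keyLem hX h₁ h₂ hu hv hpq hs
  have hτT₂ : τ ∈ T₂ := ⟨hτ, by rw [hWdef]; exact hτinf⟩
  have hγ₂τE₂ : γ₂ τ ∈ γ₂ '' Set.Icc (sInf T₂) (sSup T₂) :=
    ⟨τ, ⟨csInf_le hbb₂ hτT₂, le_csSup hba₂ hτT₂⟩, rfl⟩
  have hfx : Metric.infDist (γ₁ s) (γ₂ '' Set.Icc 0 (dist a₂ b₂)) ≤ dist (γ₁ s) (γ₂ t) :=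
    Metric.infDist_le_dist_of_mem ⟨t, ht, rfl⟩
  have hyE₂ : Metric.infDist (γ₂ t) (γ₂ '' Set.Icc (sInf T₂) (sSup T₂)) ≤
      2 * dist (γ₁ s) (γ₂ t) + 1 := by
    refine le_trans (Metric.infDist_le_dist_of_mem hγ₂τE₂) ?_
    have htri : dist (γ₂ t) (γ₂ τ) ≤ dist (γ₂ t) (γ₁ s) + dist (γ₁ s) (γ₂ τ) :=
      dist_triangle _ _ _
    rw [dist_comm (γ₂ t) (γ₁ s)] at htri
    linarith
  -- bound for infDist x E₁
  obtain ⟨τ', hτ', hτ'inf, hτ'd⟩ := keyLem hX h₂ h₁ hv hu hpq' ht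
  have hτ'T₁ : τ' ∈ T₁ := ⟨hτ', by rw [hWdef]; exact hτ'inf⟩
  have hγ₁τ'E₁ : γ₁ τ' ∈ γ₁ '' Set.Icc (sInf T₁) (sSup T₁) :=
    ⟨τ', ⟨csInf_le hbb₁ hτ'T₁, le_csSup hba₁ hτ'T₁⟩, rfl⟩
  have hfy : Metric.infDist (γ₂ t) (γ₁ '' Set.Icc 0 (dist a₁ b₁)) ≤ dist (γ₁ s) (γ₂ t) := by
    refine le_trans (Metric.infDist_le_dist_of_mem ⟨s, hs, rfl⟩) ?_
    rw [dist_comm]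
  have hxE₁ : Metric.infDist (γ₁ s) (γ₁ '' Set.Icc (sInf T₁) (sSup T₁)) ≤
      2 * dist (γ₁ s) (γ₂ t) + 1 := by
    refine le_trans (Metric.infDist_le_dist_of_mem hγ₁τ'E₁) ?_
    have htri : dist (γ₁ s) (γ₁ τ') ≤ dist (γ₁ s) (γ₂ t) + dist (γ₂ t) (γ₁ τ') :=
      dist_triangle _ _ _
    linarith
  -- Hausdorff distance bound
  have hH : Metric.hausdorffDist (γ₁ '' Set.Icc (sInf T₁) (sSup T₁))
      (γ₂ '' Set.Icc (sInf T₂) (sSup T₂)) ≤ 2 * (W + 1) + 2 * δ + 1 := by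
    apply Metric.hausdorffDist_le_of_infDist (by linarith)
    · rintro z ⟨σ, hσ, rfl⟩
      have hfσ : Metric.infDist (γ₁ σ) (γ₂ '' Set.Icc 0 (dist a₂ b₂)) ≤ 2 * (W + 1) + 2 * δ :=
        segBound hδ hW0 hX h₁ h₂ hT₁def hT₁ne hσ
      have hσL : σ ∈ Set.Icc 0 (dist a₁ b₁) := by
        constructor
        · exact le_trans (le_csInf hT₁ne fun x hx => hx.1.1) hσ.1
        · exact le_trans hσ.2 (csSup_le hT₁ne fun x hx => hx.1.2)
      obtain ⟨τ'', hτ''L, hτ''inf, hτ''d⟩ := keyLem hX h₁ h₂ hu hv hpq hσL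
      have hτ''T₂ : τ'' ∈ T₂ := ⟨hτ''L, by rw [hWdef]; exact hτ''inf⟩
      refine le_trans (Metric.infDist_le_dist_of_mem
        (⟨τ'', ⟨csInf_le hbb₂ hτ''T₂, le_csSup hba₂ hτ''T₂⟩, rfl⟩ :
          γ₂ τ'' ∈ γ₂ '' Set.Icc (sInf T₂) (sSup T₂))) ?_
      linarith
    · rintro z ⟨σ, hσ, rfl⟩
      have hfσ : Metric.infDist (γ₂ σ) (γ₁ '' Set.Icc 0 (dist a₁ b₁)) ≤ 2 * (W + 1) + 2 * δ :=
        segBound hδ hW0 hX h₂ h₁ hT₂def hT₂ne hσ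
      have hσL : σ ∈ Set.Icc 0 (dist a₂ b₂) := by
        constructor
        · exact le_trans (le_csInf hT₂ne fun x hx => hx.1.1) hσ.1
        · exact le_trans hσ.2 (csSup_le hT₂ne fun x hx => hx.1.2)
      obtain ⟨τ'', hτ''L, hτ''inf, hτ''d⟩ := keyLem hX h₂ h₁ hv hu hpq' hσL
      have hτ''T₁ : τ'' ∈ T₁ := ⟨hτ''L, by rw [hWdef]; exact hτ''inf⟩
      refine le_trans (Metric.infDist_le_dist_of_mem
        (⟨τ'', ⟨csInf_le hbb₁ hτ''T₁, le_csSup hba₁ hτ''T₁⟩, rfl⟩ :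
          γ₁ τ'' ∈ γ₁ '' Set.Icc (sInf T₁) (sSup T₁))) ?_
      linarith
  have hWexp : W = D + 4 * δ + 2 := hWdef
  linarith
end

section
/- For every δ ≥ 0 there exist K ≥ 0 and C ≥ 0, depending only on δ, with the following property. Let X be a δ-hyperbolic geodesic metric space, let σ be a geodesic from a to b with image S, let x, x' ∈ X, and let z, z' ∈ S satisfy dist x z = Metric.infDist x S and dist x' z' = Metric.infDist x' S (i.e., z and z' are nearest points of S to x and x' respectively). If dist z z' ≥ K, then dist x x' ≥ dist x z + dist z z' + dist z' x' − C. (The claim in the proof of Lemma 7.5 of the paper: when the nearest-point projections of two points to a geodesic are sufficiently far apart, the union of the geodesic with the two projection segments is, up to additive error depending only on δ, a tree with respect to the induced distance, so distances add along it.) -/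
universe u

/-- Projection lemma: if `z` is a nearest point of the geodesic image to `x`,
then for any point `y` on the geodesic, `dist x y ≥ dist x z + dist z y - 4δ`. -/
lemma proj_lower {X : Type u} [MetricSpace X] {δ : ℝ} (hδ : 0 ≤ δ)
    (hyp : DeltaHyperbolic X δ) {σ : ℝ → X} {a b : X} (hσ : IsGeodesicFrom σ a b)
    {x z y : X} (hz : z ∈ σ '' Set.Icc 0 (dist a b)) (hy : y ∈ σ '' Set.Icc 0 (dist a b))
    (hproj : dist x z = Metric.infDist x (σ '' Set.Icc 0 (dist a b))) :
    dist x z + dist z y - 4 * δ ≤ dist x y := by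
  obtain ⟨s, hs, rfl⟩ := hz
  obtain ⟨u, hu, rfl⟩ := hy
  have hgeo := hσ.2.2
  have hinf : ∀ w ∈ Set.Icc (0:ℝ) (dist a b), dist x (σ s) ≤ dist x (σ w) := by
    intro w hw
    rw [hproj]
    exact Metric.infDist_le_dist_of_mem ⟨w, hw, rfl⟩
  have hzy : dist (σ s) (σ u) = |s - u| := hgeo s hs u hu
  rcases le_or_gt (|s - u|) (2 * δ) with hsmall | hbig
  · have h := hinf u hu
    rw [hzy]
    linarith
  · refine le_of_forall_pos_le_add fun ε hε => ?_
    set t := min (2 * δ + ε) (|s - u|) with ht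
    have ht1 : 2 * δ < t := lt_min (by linarith) hbig
    have ht2 : t ≤ |s - u| := min_le_right _ _
    have ht3 : t ≤ 2 * δ + ε := min_le_left _ _
    have ht0 : 0 ≤ t := by linarith
    have key : ∀ p ∈ Set.Icc (0:ℝ) (dist a b), |p - s| = t → |p - u| = |s - u| - t →
        dist x (σ s) + dist (σ s) (σ u) - 4 * δ ≤ dist x (σ u) + ε := by
      intro p hp hps hpu
      have h4 := hyp x (σ p) (σ s) (σ u)
      rw [hgeo s hs u hu, hgeo p hp u hu, hgeo p hp s hs, hps, hpu] at h4
      have hxp := hinf p hp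
      rcases max_choice (dist x (σ s) + (|s - u| - t)) (dist x (σ u) + t) with hm | hm <;>
        rw [hm] at h4
      · linarith
      · rw [hzy]
        linarith
    rcases le_total s u with hsu | hsu
    · have habs : |s - u| = u - s := by rw [abs_of_nonpos (by linarith)]; ring
      refine key (s + t) ⟨by linarith [hs.1], by linarith [hu.2, habs ▸ ht2]⟩ ?_ ?_
      · have h1 : s + t - s = t := by ring
        rw [h1, abs_of_nonneg ht0]
      · rw [habs, abs_of_nonpos (by linarith [habs ▸ ht2])]
        ring
    · have habs : |s - u| = s - u := abs_of_nonneg (by linarith)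
      refine key (s - t) ⟨by linarith [hu.1, habs ▸ ht2], by linarith [hs.2]⟩ ?_ ?_
      · have h1 : s - t - s = -t := by ring
        rw [h1, abs_neg, abs_of_nonneg ht0]
      · rw [habs, abs_of_nonneg (by linarith [habs ▸ ht2])]
        ring

/-- Tree approximation for nearest-point projections to a geodesic in a
δ-hyperbolic space: if the projections of two points are far apart, distances
add along the tripod, up to additive error depending only on δ. -/
theorem projections_far_implies_additive :
    ∀ (δ : ℝ), 0 ≤ δ → ∃ K C : ℝ, 0 ≤ K ∧ 0 ≤ C ∧
      ∀ (X : Type u) [MetricSpace X], DeltaHyperbolic X δ → GeodesicSpace X →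
        ∀ (σ : ℝ → X) (a b : X), IsGeodesicFrom σ a b →
          ∀ (x x' z z' : X),
            z ∈ σ '' Set.Icc 0 (dist a b) → z' ∈ σ '' Set.Icc 0 (dist a b) →
            dist x z = Metric.infDist x (σ '' Set.Icc 0 (dist a b)) →
            dist x' z' = Metric.infDist x' (σ '' Set.Icc 0 (dist a b)) →
            K ≤ dist z z' →
            dist x z + dist z z' + dist z' x' - C ≤ dist x x' := by
  intro δ hδ
  refine ⟨5 * δ + 1, 10 * δ, by linarith, by linarith, ?_⟩
  intro X _ hyp _ σ a b hσ x x' z z' hz hz' hx hx' hK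
  have h1 := proj_lower hδ hyp hσ hz hz' hx
  have h2 := proj_lower hδ hyp hσ hz' hz hx'
  have h4 := hyp x z' z x'
  have c1 : dist z x' = dist x' z := dist_comm _ _
  have c2 : dist z' z = dist z z' := dist_comm _ _
  have c3 : dist z' x' = dist x' z' := dist_comm _ _
  rcases max_choice (dist x z + dist z' x') (dist x x' + dist z' z) with hm | hm <;>
    rw [hm] at h4 <;> linarith
end
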